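/- arXiv:2311.03013 — 4 statements merged into one kernel-verified Lean document; each statement's English description precedes it below -/
import Mathlib

section
/- Let F(z) = Σ_{n=0}^∞ c_n z^n be analytic on the open unit disc 𝔻 with real coefficients c_n, and set U(z) = Re F(z). Assume U has L¹_loc-boundary behavior on ∂𝔻∖{1}, and assume there exist θ₀ ∈ (0,π) and c ≥ 0 such that U(re^{iθ}) ≥ −c for all θ ∈ (−θ₀,θ₀) and all r ∈ [0,1). Then the sequence (c_n) converges, and its limit equals lim_{r→1⁻} (1−r) U(r). -/
open MeasureTheory Filter Set

/-- `U` (defined on the open unit disc) has `L¹_loc`-boundary behavior on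
`∂𝔻 ∖ {1}` (boundary points parametrized as `e^{iθ}`, `θ ∈ [-π,π] ∖ {0}`). -/
def L1locBoundaryBehaviorDisc (U : ℂ → ℝ) : Prop :=
  ∃ f : ℝ → ℝ, ∀ a b : ℝ, -Real.pi ≤ a → a ≤ b → b ≤ Real.pi → (0 : ℝ) ∉ Icc a b →
    IntegrableOn f (Icc a b) ∧
    Tendsto (fun r : ℝ => ∫ θ in a..b, |U (r * Complex.exp (θ * Complex.I)) - f θ|)
      (nhdsWithin 1 (Iio 1)) (nhds 0)


lemma cosMulCos (a b : ℝ) : Real.cos a * Real.cos b = (Real.cos (a+b) + Real.cos (a-b))/2 := by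
  rw [Real.cos_add, Real.cos_sub]; ring

lemma intCos (k : ℤ) : ∫ x in (-Real.pi)..Real.pi, Real.cos (k*x)
    = if (k:ℝ) = 0 then 2*Real.pi else 0 := by
  rcases eq_or_ne (k:ℝ) 0 with h | h
  · simp [h, two_mul]
  · rw [if_neg h]
    have := intervalIntegral.integral_comp_mul_left (c := (k:ℝ)) (fun x => Real.cos x) h
      (a := -Real.pi) (b := Real.pi)
    rw [integral_cos] at this
    rw [this]
    have h1 : Real.sin ((k:ℝ) * Real.pi) = 0 := Real.sin_int_mul_pi k
    have h2 : Real.sin ((k:ℝ) * -Real.pi) = 0 := by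
      rw [mul_neg, Real.sin_neg, h1, neg_zero]
    rw [h1, h2]; simp

lemma orth (m n : ℕ) : ∫ x in (-Real.pi)..Real.pi, Real.cos (m*x) * Real.cos (n*x)
    = if m = n then (if n = 0 then 2*Real.pi else Real.pi) else 0 := by
  have key : ∀ x : ℝ, Real.cos (m*x) * Real.cos (n*x)
      = (Real.cos (((m:ℤ)+n : ℤ)*x) + Real.cos (((m:ℤ)-n : ℤ)*x))/2 := by
    intro x
    rw [cosMulCos]
    push_cast
    ring_nf
  simp_rw [key]
  have i1 : IntervalIntegrable (fun x => Real.cos (((m:ℤ)+n : ℤ)*x)) volume (-Real.pi) Real.pi :=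
    (Real.continuous_cos.comp (continuous_const.mul continuous_id)).intervalIntegrable _ _
  have i2 : IntervalIntegrable (fun x => Real.cos (((m:ℤ)-n : ℤ)*x)) volume (-Real.pi) Real.pi :=
    (Real.continuous_cos.comp (continuous_const.mul continuous_id)).intervalIntegrable _ _
  rw [intervalIntegral.integral_div, intervalIntegral.integral_add i1 i2, intCos, intCos]
  rcases eq_or_ne m n with rfl | hmn
  · rcases eq_or_ne m 0 with rfl | hm
    · norm_num
    · have h1 : (((m:ℤ)+m : ℤ) : ℝ) ≠ 0 := by
        push_cast
        have : (0:ℝ) < m := by exact_mod_cast Nat.pos_of_ne_zero hm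
        positivity
      have h2 : (((m:ℤ)-m : ℤ) : ℝ) = 0 := by push_cast; ring
      rw [if_neg h1, if_pos h2, if_pos rfl, if_neg hm]; ring
  · have h1 : (((m:ℤ)+n : ℤ) : ℝ) ≠ 0 ∨ (((m:ℤ)+n : ℤ) : ℝ) = 0 := (ne_or_eq _ _)
    have hne : (((m:ℤ)-n : ℤ) : ℝ) ≠ 0 := by
      push_cast
      intro h
      exact hmn (by exact_mod_cast sub_eq_zero.mp h)
    rw [if_neg hne, if_neg hmn]
    rcases eq_or_ne (((m:ℤ)+n : ℤ) : ℝ) 0 with h | h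
    · rw [if_pos h]
      -- m + n = 0 with m ≠ n impossible? no: m+n=0 means m=n=0, contradiction with m≠n
      exfalso
      push_cast at h
      have hm : (m:ℝ) = 0 := by nlinarith [Nat.cast_nonneg (α := ℝ) m, Nat.cast_nonneg (α := ℝ) n]
      have hn : (n:ℝ) = 0 := by nlinarith [Nat.cast_nonneg (α := ℝ) m, Nat.cast_nonneg (α := ℝ) n]
      exact hmn (by exact_mod_cast hm.trans hn.symm)
    · rw [if_neg h]; ring


lemma summable_abs_pow' (c : ℕ → ℝ) (F : ℂ → ℂ)
    (hF : ∀ z : ℂ, ‖z‖ < 1 → HasSum (fun n : ℕ => (c n : ℂ) * z ^ n) (F z)) {r : ℝ}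
    (hr0 : 0 ≤ r) (hr1 : r < 1) : Summable (fun n => |c n| * r^n) := by
  set ρ : ℝ := (1+r)/2 with hρ
  have hρ0 : 0 < ρ := by positivity
  have hrρ : r < ρ := by rw [hρ]; linarith
  have hρ1 : ρ < 1 := by rw [hρ]; linarith
  have hs : Summable (fun n : ℕ => (c n : ℂ) * (ρ:ℂ) ^ n) := by
    refine (hF (ρ:ℂ) ?_).summable
    rw [Complex.norm_real, Real.norm_eq_abs, abs_of_nonneg hρ0.le]; exact hρ1
  have hb : ∃ C : ℝ, ∀ n, |c n| * ρ^n ≤ C := by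
    have h0 := hs.tendsto_atTop_zero
    have := h0.norm.bddAbove_range
    obtain ⟨C, hC⟩ := this
    refine ⟨C, fun n => ?_⟩
    have := hC (mem_range_self (f := fun n => ‖(c n : ℂ) * (ρ:ℂ)^n‖) n)
    simpa [abs_of_nonneg hρ0.le, abs_mul, abs_pow] using this
  obtain ⟨C, hC⟩ := hb
  have hC0 : 0 ≤ C := le_trans (by positivity) (hC 0)
  have hgeom : Summable (fun n : ℕ => C * (r/ρ)^n) := by
    refine ((summable_geometric_of_lt_one (by positivity) ?_)).mul_left C
    rw [div_lt_one hρ0]; exact hrρ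
  refine Summable.of_nonneg_of_le (fun n => by positivity) (fun n => ?_) hgeom
  · have h1 : |c n| * r^n = (|c n| * ρ^n) * (r/ρ)^n := by
      rw [mul_assoc, ← mul_pow]
      congr 2
      field_simp
    rw [h1]
    exact mul_le_mul_of_nonneg_right (hC n) (by positivity)

lemma U_hasSum' (c : ℕ → ℝ) (F : ℂ → ℂ)
    (hF : ∀ z : ℂ, ‖z‖ < 1 → HasSum (fun n : ℕ => (c n : ℂ) * z ^ n) (F z))
    (U : ℂ → ℝ) (hU : ∀ z : ℂ, U z = (F z).re) {r θ : ℝ} (hr0 : 0 ≤ r) (hr1 : r < 1) :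
    HasSum (fun n : ℕ => c n * r^n * Real.cos (n*θ))
      (U ((r:ℂ) * Complex.exp (θ * Complex.I))) := by
  set z : ℂ := (r:ℂ) * Complex.exp (θ * Complex.I) with hz
  have hnz : ‖z‖ < 1 := by
    rw [hz, norm_mul, Complex.norm_exp_ofReal_mul_I, mul_one, Complex.norm_real,
      Real.norm_eq_abs, abs_of_nonneg hr0]
    exact hr1
  have h := (hF z hnz).mapL Complex.reCLM
  rw [hU, ← Complex.reCLM_apply]
  convert h using 2 with n
  rw [hz, mul_pow, ← Complex.exp_nat_mul]
  have : (n:ℂ) * ((θ:ℝ) * Complex.I) = ((n*θ : ℝ) : ℂ) * Complex.I := by push_cast; ring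
  rw [this, ← Complex.ofReal_pow]
  simp only [Complex.reCLM_apply]
  rw [← mul_assoc, ← Complex.ofReal_mul, Complex.re_ofReal_mul,
    Complex.exp_ofReal_mul_I_re]


lemma U_cont' (c : ℕ → ℝ) (F : ℂ → ℂ)
    (hF : ∀ z : ℂ, ‖z‖ < 1 → HasSum (fun n : ℕ => (c n : ℂ) * z ^ n) (F z))
    (U : ℂ → ℝ) (hU : ∀ z : ℂ, U z = (F z).re) {r : ℝ} (hr0 : 0 ≤ r) (hr1 : r < 1) :
    Continuous (fun θ : ℝ => U ((r:ℂ) * Complex.exp (θ * Complex.I))) := by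
  have heq : (fun θ : ℝ => U ((r:ℂ) * Complex.exp (θ * Complex.I)))
      = fun θ => ∑' n : ℕ, c n * r^n * Real.cos (n*θ) := by
    funext θ
    exact (U_hasSum' c F hF U hU hr0 hr1).tsum_eq.symm
  rw [heq]
  refine continuous_tsum (fun n => ?_) (summable_abs_pow' c F hF hr0 hr1) (fun n θ => ?_)
  · exact (continuous_const.mul ((Real.continuous_cos.comp (continuous_const.mul continuous_id))))
  · rw [Real.norm_eq_abs, abs_mul, abs_mul, abs_pow]
    calc |c n| * |r|^n * |Real.cos (n*θ)| ≤ |c n| * |r|^n * 1 :=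
          mul_le_mul_of_nonneg_left (Real.abs_cos_le_one _) (by positivity)
      _ = |c n| * |r|^n := mul_one _
      _ ≤ |c n| * r^n := by rw [abs_of_nonneg hr0]

lemma fourier_formula' (c : ℕ → ℝ) (F : ℂ → ℂ)
    (hF : ∀ z : ℂ, ‖z‖ < 1 → HasSum (fun n : ℕ => (c n : ℂ) * z ^ n) (F z))
    (U : ℂ → ℝ) (hU : ∀ z : ℂ, U z = (F z).re) {r : ℝ} (hr0 : 0 ≤ r) (hr1 : r < 1) (N : ℕ) :
    ∫ θ in (-Real.pi)..Real.pi, U ((r:ℂ) * Complex.exp (θ * Complex.I)) * Real.cos (N*θ)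
      = (if N = 0 then 2*Real.pi else Real.pi) * (c N * r^N) := by
  have hsum := summable_abs_pow' c F hF hr0 hr1
  have hle : -Real.pi ≤ Real.pi := by linarith [Real.pi_pos]
  set f : ℕ → ℝ → ℝ := fun n θ => (c n * r^n) * (Real.cos (n*θ) * Real.cos (N*θ)) with hf
  have hfc : ∀ n, Continuous (f n) := fun n => continuous_const.mul
    (((Real.continuous_cos.comp (continuous_const.mul continuous_id))).mul
      ((Real.continuous_cos.comp (continuous_const.mul continuous_id))))
  have key : ∀ θ : ℝ, U ((r:ℂ) * Complex.exp (θ * Complex.I)) * Real.cos (N*θ)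
      = ∑' n : ℕ, f n θ := by
    intro θ
    rw [← (U_hasSum' c F hF U hU hr0 hr1).tsum_eq, ← tsum_mul_right]
    congr 1; funext n; rw [hf]; ring
  simp_rw [key]
  rw [intervalIntegral.integral_of_le hle]
  set μ : Measure ℝ := volume.restrict (Ioc (-Real.pi) Real.pi) with hμ
  have hμfin : μ (univ) < ⊤ := by
    rw [hμ, Measure.restrict_apply MeasurableSet.univ, univ_inter, Real.volume_Ioc]
    exact ENNReal.ofReal_lt_top
  have hint : ∀ n, Integrable (f n) μ := fun n =>
    (hfc n).integrableOn_Ioc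
  have hnorm : ∀ n, (∫ θ, ‖f n θ‖ ∂μ) ≤ (2*Real.pi) * (|c n| * r^n) := by
    intro n
    have hbd : ∀ θ, ‖f n θ‖ ≤ |c n| * r^n := by
      intro θ
      rw [hf, Real.norm_eq_abs, abs_mul, abs_mul, abs_mul, abs_pow, abs_of_nonneg hr0]
      calc |c n| * r^n * (|Real.cos (n*θ)| * |Real.cos (N*θ)|)
          ≤ |c n| * r^n * (1*1) := by
            refine mul_le_mul_of_nonneg_left ?_ (by positivity)
            exact mul_le_mul (Real.abs_cos_le_one _) (Real.abs_cos_le_one _) (abs_nonneg _)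
              zero_le_one
        _ = |c n| * r^n := by ring
    calc (∫ θ, ‖f n θ‖ ∂μ) ≤ ∫ _, (|c n| * r^n) ∂μ :=
          integral_mono (hint n).norm (integrable_const _) hbd
      _ = (μ univ).toReal * (|c n| * r^n) := by rw [integral_const, smul_eq_mul]; rfl
      _ ≤ (2*Real.pi) * (|c n| * r^n) := by
          refine mul_le_mul_of_nonneg_right ?_ (by positivity)
          rw [hμ, Measure.restrict_apply MeasurableSet.univ, univ_inter, Real.volume_Ioc,
            ENNReal.toReal_ofReal (by linarith)]
          linarith
  have hsummable : Summable (fun n => ∫ θ, ‖f n θ‖ ∂μ) := by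
    refine Summable.of_nonneg_of_le (fun n => integral_nonneg (fun θ => norm_nonneg _))
      hnorm (hsum.mul_left (2*Real.pi))
  rw [← MeasureTheory.integral_tsum_of_summable_integral_norm hint hsummable]
  have hval : ∀ n : ℕ, (∫ θ, f n θ ∂μ)
      = (c n * r^n) * (if n = N then (if N = 0 then 2*Real.pi else Real.pi) else 0) := by
    intro n
    rw [hf]
    simp only
    rw [MeasureTheory.integral_const_mul, hμ, ← intervalIntegral.integral_of_le hle, orth n N]
  simp_rw [hval]
  rw [tsum_eq_single N (fun n hn => by rw [if_neg hn, mul_zero])]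
  rw [if_pos rfl]; ring


lemma abel_limit {c : ℕ → ℝ} {a : ℝ} (hd : Tendsto c atTop (nhds a)) :
    Tendsto (fun r : ℝ => (1-r) * ∑' n : ℕ, c n * r^n) (nhdsWithin 1 (Iio 1)) (nhds a) := by
  -- boundedness of |c n - a|
  obtain ⟨M, hM⟩ : ∃ M : ℝ, ∀ n, |c n - a| ≤ M := by
    obtain ⟨M, hM'⟩ := ((hd.sub_const a).abs).bddAbove_range
    exact ⟨M, fun n => hM' (mem_range_self (f := fun n => |c n - a|) n)⟩
  have hsummable : ∀ r : ℝ, 0 ≤ r → r < 1 → Summable (fun n : ℕ => |c n - a| * r^n) := by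
    intro r hr0 hr1
    refine Summable.of_nonneg_of_le (fun n => by positivity) (fun n =>
      mul_le_mul_of_nonneg_right (hM n) (by positivity))
      ((summable_geometric_of_lt_one hr0 hr1).mul_left M)
  have hsum2 : ∀ r : ℝ, 0 ≤ r → r < 1 → Summable (fun n : ℕ => (c n - a) * r^n) := by
    intro r hr0 hr1
    refine Summable.of_norm ?_
    simpa [abs_mul, abs_of_nonneg hr0, abs_pow] using hsummable r hr0 hr1
  have hsumc : ∀ r : ℝ, 0 ≤ r → r < 1 → Summable (fun n : ℕ => c n * r^n) := by
    intro r hr0 hr1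
    have := (hsum2 r hr0 hr1).add (((summable_geometric_of_lt_one hr0 hr1)).mul_left a)
    refine this.congr (fun n => by ring)
  rw [Metric.tendsto_nhdsWithin_nhds]
  intro ε hε
  obtain ⟨N, hN⟩ : ∃ N : ℕ, ∀ n, N ≤ n → |c n - a| ≤ ε/4 := by
    have := (hd.sub_const a).abs
    rw [Metric.tendsto_atTop] at this
    obtain ⟨N, hN⟩ := this (ε/4) (by positivity)
    exact ⟨N, fun n hn => by
      have := hN n hn
      rw [Real.dist_eq, sub_self, abs_zero, sub_zero, abs_abs] at this
      exact this.le⟩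
  set S : ℝ := ∑ n ∈ Finset.range N, |c n - a| with hS
  have hS0 : 0 ≤ S := Finset.sum_nonneg (fun n _ => abs_nonneg _)
  refine ⟨min 1 (ε/(4*(S+1))), by positivity, fun r hr hdist => ?_⟩
  rw [Real.dist_eq] at hdist ⊢
  have hr1 : r < 1 := hr
  have hd1 : 1 - r < min 1 (ε/(4*(S+1))) := by
    rw [abs_sub_lt_iff] at hdist; exact hdist.2
  have hr0 : 0 ≤ r := by
    have := lt_of_lt_of_le hd1 (min_le_left _ _); linarith
  have h1r : 0 < 1 - r := by linarith
  -- decompose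
  have hgeo : ∑' n : ℕ, r^n = (1-r)⁻¹ := tsum_geometric_of_lt_one hr0 hr1
  have hkey : (1-r) * ∑' n : ℕ, c n * r^n - a = (1-r) * ∑' n : ℕ, (c n - a) * r^n := by
    have h2 : ∑' n : ℕ, c n * r^n = (∑' n : ℕ, (c n - a) * r^n) + a * (1-r)⁻¹ := by
      rw [← hgeo, ← tsum_mul_left, ← Summable.tsum_add (hsum2 r hr0 hr1)
        (((summable_geometric_of_lt_one hr0 hr1)).mul_left a)]
      congr 1; funext n; ring
    rw [h2]
    field_simp
    ring
  rw [hkey]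
  -- split the sum at N
  have hsplit := Summable.sum_add_tsum_nat_add (f := fun n : ℕ => (c n - a) * r^n) N
    (hsum2 r hr0 hr1)
  rw [← hsplit]
  have hbound1 : |∑ n ∈ Finset.range N, (c n - a) * r^n| ≤ S := by
    refine (Finset.abs_sum_le_sum_abs _ _).trans ?_
    rw [hS]
    refine Finset.sum_le_sum (fun n _ => ?_)
    rw [abs_mul, abs_pow, abs_of_nonneg hr0]
    calc |c n - a| * r^n ≤ |c n - a| * 1 := by
          refine mul_le_mul_of_nonneg_left (pow_le_one₀ hr0 hr1.le) (abs_nonneg _)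
      _ = |c n - a| := mul_one _
  have hbound2 : |∑' n : ℕ, (c (n + N) - a) * r^(n+N)| ≤ (ε/4) * (1-r)⁻¹ := by
    have hs1 : Summable (fun n : ℕ => |c (n+N) - a| * r^(n+N)) :=
      ((hsummable r hr0 hr1).comp_injective (add_left_injective N))
    have hs2 : Summable (fun n : ℕ => (ε/4) * r^n) :=
      ((summable_geometric_of_lt_one hr0 hr1)).mul_left _
    calc |∑' n : ℕ, (c (n + N) - a) * r^(n+N)|
        ≤ ∑' n : ℕ, |c (n+N) - a| * r^(n+N) := by
          rw [← Real.norm_eq_abs]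
          refine (norm_tsum_le_tsum_norm ?_).trans_eq ?_
          · simpa [abs_mul, abs_pow, abs_of_nonneg hr0] using hs1
          · congr 1; funext n; rw [Real.norm_eq_abs, abs_mul, abs_pow, abs_of_nonneg hr0]
      _ ≤ ∑' n : ℕ, (ε/4) * r^n := by
          refine Summable.tsum_le_tsum (fun n => ?_) hs1 hs2
          calc |c (n+N) - a| * r^(n+N) ≤ (ε/4) * r^(n+N) :=
                mul_le_mul_of_nonneg_right (hN _ (Nat.le_add_left _ _)) (by positivity)
            _ ≤ (ε/4) * r^n := by
                refine mul_le_mul_of_nonneg_left ?_ (by positivity)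
                exact pow_le_pow_of_le_one hr0 hr1.le (Nat.le_add_right _ _)
      _ = (ε/4) * (1-r)⁻¹ := by rw [tsum_mul_left, hgeo]
  calc |(1-r) * (∑ n ∈ Finset.range N, (c n - a) * r^n + ∑' n : ℕ, (c (n+N) - a) * r^(n+N))|
      ≤ (1-r) * (S + (ε/4) * (1-r)⁻¹) := by
        rw [abs_mul, abs_of_nonneg h1r.le]
        refine mul_le_mul_of_nonneg_left ?_ h1r.le
        exact (abs_add_le _ _).trans (add_le_add hbound1 hbound2)
    _ = (1-r) * S + (ε/4) * ((1-r) * (1-r)⁻¹) := by ring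
    _ = (1-r) * S + ε/4 := by rw [mul_inv_cancel₀ (by linarith), mul_one]
    _ < ε := by
        have h3 : 1 - r < ε/(4*(S+1)) := lt_of_lt_of_le hd1 (min_le_right _ _)
        have h4 : (1-r) * S ≤ (ε/(4*(S+1))) * S := by nlinarith
        have h5 : (ε/(4*(S+1))) * S < ε/2 := by
          rw [div_mul_eq_mul_div, div_lt_iff₀ (by positivity)]
          nlinarith
        linarith


lemma riemann_lebesgue_cos {f : ℝ → ℝ} (hf : IntegrableOn f (Ioc (-Real.pi) Real.pi)) :
    Tendsto (fun n : ℕ => ∫ θ in (-Real.pi)..Real.pi, f θ * Real.cos (n*θ)) atTop (nhds 0) := by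
  have hπ := Real.pi_pos
  set g : ℝ → ℂ := indicator (Ioc (-Real.pi) Real.pi) (fun θ => (f θ : ℂ)) with hg
  have hgi : Integrable g := by
    rw [hg, integrable_indicator_iff measurableSet_Ioc]
    exact hf.ofReal
  have h1 : Tendsto (FourierTransform.fourier g) (cocompact ℝ) (nhds 0) :=
    Real.zero_at_infty_fourier g
  have h2 : Tendsto (fun n : ℕ => (n:ℝ)/(2*Real.pi)) atTop (cocompact ℝ) := by
    rw [cocompact_eq_atBot_atTop]
    refine Tendsto.mono_right ?_ le_sup_right
    exact Tendsto.atTop_div_const (by positivity) tendsto_natCast_atTop_atTop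
  have h3 := (Complex.continuous_re.tendsto 0).comp (h1.comp h2)
  simp only [Complex.zero_re] at h3
  refine h3.congr (fun n => ?_)
  simp only [Function.comp_apply]
  rw [Real.fourier_real_eq_integral_exp_smul]
  have hint : Integrable (fun v : ℝ =>
      Complex.exp ((-2 * Real.pi * v * ((n:ℝ)/(2*Real.pi)) : ℝ) * Complex.I) • g v) := by
    refine Integrable.bdd_mul (c := 1) hgi ?_ (Eventually.of_forall fun v => ?_)
    · refine (Continuous.aestronglyMeasurable ?_)
      exact Complex.continuous_exp.comp ((Complex.continuous_ofReal.comp (by continuity)).mul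
        continuous_const)
    · rw [Complex.norm_exp_ofReal_mul_I]
  have hcomm := Complex.reCLM.integral_comp_comm hint
  simp only [Complex.reCLM_apply] at hcomm
  rw [← hcomm]
  have hpt : ∀ v : ℝ, (Complex.exp ((-2 * Real.pi * v * ((n:ℝ)/(2*Real.pi)) : ℝ) * Complex.I)
      • g v).re = indicator (Ioc (-Real.pi) Real.pi) (fun θ => f θ * Real.cos (n*θ)) v := by
    intro v
    have harg : (-2 * Real.pi * v * ((n:ℝ)/(2*Real.pi)) : ℝ) = -(n*v) := by
      field_simp
    rw [harg]
    by_cases hv : v ∈ Ioc (-Real.pi) Real.pi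
    · rw [hg, indicator_of_mem hv, indicator_of_mem hv, smul_eq_mul, Complex.mul_re,
        Complex.exp_ofReal_mul_I_re, Complex.exp_ofReal_mul_I_im, Complex.ofReal_re,
        Complex.ofReal_im, mul_zero, sub_zero, Real.cos_neg]
      ring
    · rw [hg, indicator_of_notMem hv, indicator_of_notMem hv, smul_zero, Complex.zero_re]
  simp_rw [hpt]
  rw [integral_indicator measurableSet_Ioc, intervalIntegral.integral_of_le (by linarith)]


set_option maxHeartbeats 2000000 in
/-- Theorem 1.4: Tauberian theorem for power series with real coefficients. -/
theorem power_series_tauberian_b1 (c : ℕ → ℝ) (F : ℂ → ℂ)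
    (hF : ∀ z : ℂ, ‖z‖ < 1 → HasSum (fun n : ℕ => (c n : ℂ) * z ^ n) (F z))
    (U : ℂ → ℝ) (hU : ∀ z : ℂ, U z = (F z).re)
    (hbd : L1locBoundaryBehaviorDisc U)
    (θ₀ : ℝ) (hθ₀ : θ₀ ∈ Ioo 0 Real.pi)
    (cst : ℝ) (hcst : 0 ≤ cst)
    (hlow : ∀ θ ∈ Ioo (-θ₀) θ₀, ∀ r ∈ Ico (0 : ℝ) 1,
      -cst ≤ U (r * Complex.exp (θ * Complex.I))) :
    ∃ a : ℝ,
      Tendsto c atTop (nhds a) ∧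
      Tendsto (fun r : ℝ => (1 - r) * U r) (nhdsWithin 1 (Iio 1)) (nhds a) := by
  obtain ⟨f, hf⟩ := hbd
  have hπ := Real.pi_pos
  obtain ⟨hθ1, hθ2⟩ := hθ₀
  set δ0 : ℝ := θ₀/2 with hδ0def
  have hδ0pos : 0 < δ0 := by positivity
  have hδ0lt : δ0 < θ₀ := by rw [hδ0def]; linarith
  have hδ0π : δ0 < Real.pi := by linarith
  set V : ℝ → ℝ → ℝ := fun r θ => U ((r:ℂ) * Complex.exp ((θ:ℝ) * Complex.I)) with hV
  have hVcont : ∀ r : ℝ, r ∈ Ioo (0:ℝ) 1 → Continuous (V r) :=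
    fun r hr => U_cont' c F hF U hU hr.1.le hr.2
  have hVii : ∀ r : ℝ, r ∈ Ioo (0:ℝ) 1 → ∀ a b : ℝ, IntervalIntegrable (V r) volume a b :=
    fun r hr a b => (hVcont r hr).intervalIntegrable a b
  have hev01 : ∀ᶠ r in nhdsWithin (1:ℝ) (Iio 1), r ∈ Ioo (0:ℝ) 1 :=
    Ioo_mem_nhdsLT_of_mem (by constructor <;> norm_num)
  -- boundary integrals with continuous weights converge
  have hbdry : ∀ a b : ℝ, -Real.pi ≤ a → a ≤ b → b ≤ Real.pi → (0:ℝ) ∉ Icc a b →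
      ∀ w : ℝ → ℝ, Continuous w → (∀ θ, |w θ| ≤ 1) →
      Tendsto (fun r => ∫ θ in a..b, V r θ * w θ) (nhdsWithin (1:ℝ) (Iio 1))
        (nhds (∫ θ in a..b, f θ * w θ)) := by
    intro a b ha hab hb h0 w hw hw1
    obtain ⟨hfi, htd⟩ := hf a b ha hab hb h0
    have hfii : IntervalIntegrable f volume a b := by
      rw [intervalIntegrable_iff, uIoc_of_le hab]
      exact hfi.mono_set Ioc_subset_Icc_self
    have hfwii : IntervalIntegrable (fun θ => f θ * w θ) volume a b := by
      rw [intervalIntegrable_iff, uIoc_of_le hab]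
      exact (hfi.mul_continuousOn hw.continuousOn isCompact_Icc).mono_set Ioc_subset_Icc_self
    have key : Tendsto (fun r => (∫ θ in a..b, V r θ * w θ) - ∫ θ in a..b, f θ * w θ)
        (nhdsWithin (1:ℝ) (Iio 1)) (nhds 0) := by
      refine squeeze_zero_norm' ?_ htd
      filter_upwards [hev01] with r hr
      have hVw : IntervalIntegrable (fun θ => V r θ * w θ) volume a b :=
        (((hVcont r hr).mul hw)).intervalIntegrable a b
      have hVfii : IntervalIntegrable (fun θ => V r θ - f θ) volume a b :=
        (hVii r hr a b).sub hfii
      have e1 : (∫ θ in a..b, V r θ * w θ) - ∫ θ in a..b, f θ * w θ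
          = ∫ θ in a..b, (V r θ - f θ) * w θ := by
        rw [← intervalIntegral.integral_sub hVw hfwii]
        congr 1; funext θ; ring
      rw [Real.norm_eq_abs, e1]
      calc |∫ θ in a..b, (V r θ - f θ) * w θ|
          ≤ ∫ θ in a..b, |(V r θ - f θ) * w θ| :=
            intervalIntegral.abs_integral_le_integral_abs hab
        _ ≤ ∫ θ in a..b, |V r θ - f θ| := by
            refine intervalIntegral.integral_mono_on hab ?_ hVfii.abs (fun θ _ => ?_)
            · exact (hVfii.mul_continuousOn hw.continuousOn).abs
            · rw [abs_mul]
              calc |V r θ - f θ| * |w θ| ≤ |V r θ - f θ| * 1 :=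
                    mul_le_mul_of_nonneg_left (hw1 θ) (abs_nonneg _)
                _ = _ := mul_one _
    have := key.add_const (∫ θ in a..b, f θ * w θ)
    simpa using this
  have hbdry1 : ∀ a b : ℝ, -Real.pi ≤ a → a ≤ b → b ≤ Real.pi → (0:ℝ) ∉ Icc a b →
      Tendsto (fun r => ∫ θ in a..b, V r θ) (nhdsWithin (1:ℝ) (Iio 1))
        (nhds (∫ θ in a..b, f θ)) := by
    intro a b ha hab hb h0
    have := hbdry a b ha hab hb h0 (fun _ => 1) continuous_const (fun θ => by norm_num)
    simpa using this
  -- total mass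
  have hmass : ∀ r : ℝ, r ∈ Ioo (0:ℝ) 1 →
      (∫ θ in (-Real.pi)..Real.pi, V r θ) = 2*Real.pi * c 0 := by
    intro r hr
    have := fourier_formula' c F hF U hU hr.1.le hr.2 0
    simp only [Nat.cast_zero, zero_mul, Real.cos_zero, mul_one, pow_zero, if_pos] at this
    rw [this]
  -- uniform bound for the mass near θ = 0
  set Jp : ℝ := ∫ θ in δ0..Real.pi, f θ with hJp
  set Jm : ℝ := ∫ θ in (-Real.pi)..(-δ0), f θ with hJm
  set K : ℝ := 2*Real.pi * c 0 - Jp - Jm + 4*cst*δ0 + 1 with hKdef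
  have h0p : (0:ℝ) ∉ Icc δ0 Real.pi := fun h => absurd h.1 (not_le.mpr hδ0pos)
  have h0m : (0:ℝ) ∉ Icc (-Real.pi) (-δ0) := fun h => absurd h.2 (not_le.mpr (by linarith))
  have hK : ∀ᶠ r in nhdsWithin (1:ℝ) (Iio 1),
      (∫ θ in (-δ0)..δ0, |V r θ|) ≤ K := by
    have tp := hbdry1 δ0 Real.pi (by linarith) hδ0π.le le_rfl h0p
    have tm := hbdry1 (-Real.pi) (-δ0) le_rfl (by linarith) (by linarith) h0m
    have tp' : ∀ᶠ r in nhdsWithin (1:ℝ) (Iio 1),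
        dist (∫ θ in δ0..Real.pi, V r θ) Jp < 1/2 :=
      Metric.tendsto_nhds.mp tp (1/2) (by norm_num)
    have tm' : ∀ᶠ r in nhdsWithin (1:ℝ) (Iio 1),
        dist (∫ θ in (-Real.pi)..(-δ0), V r θ) Jm < 1/2 :=
      Metric.tendsto_nhds.mp tm (1/2) (by norm_num)
    filter_upwards [hev01, tp', tm'] with r hr htp htm
    rw [Real.dist_eq, abs_sub_lt_iff] at htp htm
    have hlow' : ∀ θ ∈ Icc (-δ0) δ0, -cst ≤ V r θ := by
      intro θ hθ
      exact hlow θ ⟨by linarith [hθ.1], by linarith [hθ.2]⟩ r ⟨hr.1.le, hr.2⟩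
    have step1 : (∫ θ in (-δ0)..δ0, |V r θ|) ≤ ∫ θ in (-δ0)..δ0, (V r θ + 2*cst) := by
      refine intervalIntegral.integral_mono_on (by linarith) ((hVii r hr _ _).abs)
        ((hVii r hr _ _).add intervalIntegrable_const) (fun θ hθ => ?_)
      have := hlow' θ hθ
      rw [abs_le]
      constructor <;> [linarith; skip]
      rcases le_or_gt (V r θ) 0 with h | h
      · linarith
      · linarith
    have step2 : (∫ θ in (-δ0)..δ0, (V r θ + 2*cst))
        = (∫ θ in (-δ0)..δ0, V r θ) + 4*cst*δ0 := by
      rw [intervalIntegral.integral_add (hVii r hr _ _) intervalIntegrable_const,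
        intervalIntegral.integral_const, smul_eq_mul]
      ring
    have hsplit1 : (∫ θ in (-Real.pi)..(-δ0), V r θ) + (∫ θ in (-δ0)..δ0, V r θ)
        = ∫ θ in (-Real.pi)..δ0, V r θ :=
      intervalIntegral.integral_add_adjacent_intervals (hVii r hr _ _) (hVii r hr _ _)
    have hsplit2 : (∫ θ in (-Real.pi)..δ0, V r θ) + (∫ θ in δ0..Real.pi, V r θ)
        = ∫ θ in (-Real.pi)..Real.pi, V r θ :=
      intervalIntegral.integral_add_adjacent_intervals (hVii r hr _ _) (hVii r hr _ _)
    have hm := hmass r hr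
    calc (∫ θ in (-δ0)..δ0, |V r θ|) ≤ (∫ θ in (-δ0)..δ0, V r θ) + 4*cst*δ0 := by
          rw [← step2]; exact step1
      _ ≤ K := by
          rw [hKdef]
          have e1 : (∫ θ in (-δ0)..δ0, V r θ) = 2*Real.pi * c 0
              - (∫ θ in (-Real.pi)..(-δ0), V r θ) - (∫ θ in δ0..Real.pi, V r θ) := by
            rw [← hm, ← hsplit2, ← hsplit1]; ring
          rw [e1]
          linarith [htp.2, htm.2]
  -- integrability of f near 0 and on all of (-π, π]
  have hδi_pos : ∀ i : ℕ, 0 < δ0/((i:ℝ)+1) := fun i => by positivity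
  have hδi_le : ∀ i : ℕ, δ0/((i:ℝ)+1) ≤ δ0 := fun i => by
    rw [div_le_iff₀ (by positivity)]
    nlinarith [Nat.cast_nonneg (α := ℝ) i, hδ0pos]
  have hδi_tend : Tendsto (fun i : ℕ => δ0/((i:ℝ)+1)) atTop (nhds 0) := by
    have h1 : Tendsto (fun i : ℕ => (i:ℝ)+1) atTop atTop :=
      tendsto_atTop_add_const_right _ 1 tendsto_natCast_atTop_atTop
    exact Tendsto.div_atTop tendsto_const_nhds h1
  have hbound : ∀ a b : ℝ, 0 < a ∨ b < 0 → -δ0 ≤ a → a ≤ b → b ≤ δ0 →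
      (∫ θ in Ioc a b, ‖f θ‖) ≤ K + 1 := by
    intro a b hab0 ha hab hb
    have h0ab : (0:ℝ) ∉ Icc a b := by
      rcases hab0 with h | h
      · exact fun hc => absurd hc.1 (not_le.mpr h)
      · exact fun hc => absurd hc.2 (not_le.mpr h)
    obtain ⟨hfi, htd⟩ := hf a b (by linarith) hab (by linarith) h0ab
    have hfii : IntervalIntegrable f volume a b := by
      rw [intervalIntegrable_iff, uIoc_of_le hab]
      exact hfi.mono_set Ioc_subset_Icc_self
    have htd' : ∀ᶠ r in nhdsWithin (1:ℝ) (Iio 1),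
        (∫ θ in a..b, |V r θ - f θ|) < 1 :=
      htd.eventually_lt_const one_pos
    obtain ⟨r, hr, hrd, hrK⟩ := (hev01.and (htd'.and hK)).exists
    obtain ⟨hrd, hrK⟩ := And.intro hrd hrK
    have h1 : (∫ θ in Ioc a b, ‖f θ‖) = ∫ θ in a..b, |f θ| := by
      rw [intervalIntegral.integral_of_le hab]
      rfl
    rw [h1]
    have hVfii : IntervalIntegrable (fun θ => |V r θ - f θ|) volume a b :=
      ((hVii r hr a b).sub hfii).abs
    have hVabs : IntervalIntegrable (fun θ => |V r θ|) volume a b := (hVii r hr a b).abs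
    calc (∫ θ in a..b, |f θ|)
        ≤ ∫ θ in a..b, (|V r θ - f θ| + |V r θ|) := by
          refine intervalIntegral.integral_mono_on hab hfii.abs (hVfii.add hVabs)
            (fun θ _ => ?_)
          calc |f θ| = |V r θ - (V r θ - f θ)| := by congr 1; ring
            _ ≤ |V r θ| + |V r θ - f θ| := abs_sub _ _
            _ = |V r θ - f θ| + |V r θ| := add_comm _ _
      _ = (∫ θ in a..b, |V r θ - f θ|) + ∫ θ in a..b, |V r θ| :=
          intervalIntegral.integral_add hVfii hVabs
      _ ≤ 1 + ∫ θ in (-δ0)..δ0, |V r θ| := by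
          refine add_le_add hrd.le ?_
          refine intervalIntegral.integral_mono_interval ha hab hb ?_ ((hVii r hr _ _).abs)
          exact Eventually.of_forall (fun θ => abs_nonneg _)
      _ ≤ 1 + K := by linarith
      _ = K + 1 := by ring
  have hfR : IntegrableOn f (Ioc 0 δ0) := by
    refine integrableOn_Ioc_of_intervalIntegral_norm_bounded_left
      (a := fun i : ℕ => δ0/((i:ℝ)+1)) (l := atTop) (I := K+1) ?_ hδi_tend ?_
    · intro i
      exact ((hf (δ0/((i:ℝ)+1)) δ0 (by linarith [hδi_pos i]) (hδi_le i) (by linarith)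
        (fun hc => absurd hc.1 (not_le.mpr (hδi_pos i)))).1).mono_set Ioc_subset_Icc_self
    · filter_upwards with i
      exact hbound _ _ (Or.inl (hδi_pos i)) (by linarith [hδi_pos i]) (hδi_le i) le_rfl
  have hfL : IntegrableOn f (Ioc (-δ0) 0) := by
    refine integrableOn_Ioc_of_intervalIntegral_norm_bounded_right
      (b := fun i : ℕ => -(δ0/((i:ℝ)+1))) (l := atTop) (I := K+1) ?_ ?_ ?_
    · intro i
      exact ((hf (-δ0) (-(δ0/((i:ℝ)+1))) (by linarith) (by linarith [hδi_pos i, hδi_le i])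
        (by linarith [hδi_pos i, hδi_le i])
        (fun hc => absurd hc.2 (not_le.mpr (by linarith [hδi_pos i])))).1).mono_set
        Ioc_subset_Icc_self
    · simpa using hδi_tend.neg
    · filter_upwards with i
      exact hbound _ _ (Or.inr (by linarith [hδi_pos i])) (by linarith [hδi_pos i, hδi_le i])
        (by linarith [hδi_pos i, hδi_le i]) (by linarith [hδi_pos i, hδi_le i])
  have hfint : IntegrableOn f (Ioc (-Real.pi) Real.pi) := by
    have h1 : IntegrableOn f (Ioc (-Real.pi) (-δ0)) :=
      ((hf (-Real.pi) (-δ0) le_rfl (by linarith) (by linarith) h0m).1).mono_set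
        Ioc_subset_Icc_self
    have h4 : IntegrableOn f (Ioc δ0 Real.pi) :=
      ((hf δ0 Real.pi (by linarith) hδ0π.le le_rfl h0p).1).mono_set Ioc_subset_Icc_self
    have e : Ioc (-Real.pi) Real.pi
        = (Ioc (-Real.pi) (-δ0) ∪ Ioc (-δ0) 0) ∪ (Ioc 0 δ0 ∪ Ioc δ0 Real.pi) := by
      rw [Ioc_union_Ioc_eq_Ioc (by linarith) (by linarith),
        Ioc_union_Ioc_eq_Ioc (by linarith) (by linarith),
        Ioc_union_Ioc_eq_Ioc (by linarith) (by linarith)]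
    rw [e]
    exact ((h1.union hfL).union (hfR.union h4))
  have hfsub : ∀ a b : ℝ, -Real.pi ≤ a → a ≤ b → b ≤ Real.pi →
      IntervalIntegrable f volume a b := by
    intro a b ha hab hb
    rw [intervalIntegrable_iff, uIoc_of_le hab]
    exact hfint.mono_set (Ioc_subset_Ioc ha hb)
  -- absolute continuity of ∫|f| near 0
  have hsmall : Tendsto
      (fun i : ℕ => ∫ θ in (-(δ0/((i:ℝ)+1)))..(δ0/((i:ℝ)+1)), |f θ|) atTop (nhds 0) := by
    set s : ℕ → Set ℝ := fun i => Ioc (-(δ0/((i:ℝ)+1))) (δ0/((i:ℝ)+1)) with hs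
    have hanti : Antitone s := by
      intro i j hij
      have hle : δ0/((j:ℝ)+1) ≤ δ0/((i:ℝ)+1) := by
        rw [div_le_div_iff₀ (by positivity) (by positivity)]
        have : ((i:ℝ)) ≤ (j:ℝ) := by exact_mod_cast hij
        nlinarith
      exact Ioc_subset_Ioc (by linarith) hle
    have habs : IntegrableOn (fun θ => |f θ|) (s 0) := by
      refine (hfint.mono_set ?_).abs
      refine Ioc_subset_Ioc (by linarith [hδi_le 0]) (by linarith [hδi_le 0])
    have htends := Antitone.tendsto_setIntegral (μ := volume)
      (fun i => measurableSet_Ioc) hanti habs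
    have hInter : (⋂ i, s i) ⊆ ({0} : Set ℝ) := by
      intro x hx
      simp only [mem_iInter] at hx
      simp only [mem_singleton_iff]
      by_contra hne
      rcases lt_or_gt_of_ne hne with hneg | hpos
      · obtain ⟨i, hi⟩ := (hδi_tend.eventually_lt_const (show (0:ℝ) < -x by linarith)).exists
        have := (hx i).1
        linarith
      · obtain ⟨i, hi⟩ := (hδi_tend.eventually_lt_const hpos).exists
        have := (hx i).2
        linarith
    have hzero : (∫ θ in (⋂ i, s i), |f θ|) = 0 := by
      have h0 : volume (⋂ i, s i) = 0 :=
        measure_mono_null hInter (by simp)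
      rw [Measure.restrict_eq_zero.mpr h0, integral_zero_measure]
    rw [hzero] at htends
    refine htends.congr (fun i => ?_)
    rw [intervalIntegral.integral_of_le (by linarith [hδi_pos i])]
  -- the main identity
  have hid : ∀ N : ℕ, N ≠ 0 → Real.pi * c N
      = (2*Real.pi*c 0 - ∫ θ in (-Real.pi)..Real.pi, f θ)
        + ∫ θ in (-Real.pi)..Real.pi, f θ * Real.cos (N*θ) := by
    intro N hN
    set A : ℝ := 2*Real.pi*c 0 - ∫ θ in (-Real.pi)..Real.pi, f θ with hA
    set wN : ℝ → ℝ := fun θ => Real.cos ((N:ℝ)*θ) with hwN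
    have hwc : Continuous wN := Real.continuous_cos.comp (continuous_const.mul continuous_id)
    set IW : ℝ := ∫ θ in (-Real.pi)..Real.pi, f θ * wN θ with hIW
    have hfIcc : ∀ a b : ℝ, -Real.pi ≤ a → a ≤ b → b ≤ Real.pi →
        IntervalIntegrable (fun θ => f θ * wN θ) volume a b := by
      intro a b ha hab hb
      rw [intervalIntegrable_iff, uIoc_of_le hab]
      have : IntegrableOn f (Icc a b) := by
        rw [integrableOn_Icc_iff_integrableOn_Ioc]
        exact hfint.mono_set (Ioc_subset_Ioc ha hb)
      exact (this.mul_continuousOn hwc.continuousOn isCompact_Icc).mono_set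
        Ioc_subset_Icc_self
    -- D(r) equality
    have hDeq : ∀ r ∈ Ioo (0:ℝ) 1, Real.pi*(c N * r^N) - (A + IW)
        = ∫ θ in (-Real.pi)..Real.pi, (f θ - V r θ)*(1 - wN θ) := by
      intro r hr
      have i_f : IntervalIntegrable f volume (-Real.pi) Real.pi :=
        hfsub _ _ le_rfl (by linarith) le_rfl
      have i_fw : IntervalIntegrable (fun θ => f θ * wN θ) volume (-Real.pi) Real.pi :=
        hfIcc _ _ le_rfl (by linarith) le_rfl
      have i_V : IntervalIntegrable (V r) volume (-Real.pi) Real.pi := hVii r hr _ _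
      have i_Vw : IntervalIntegrable (fun θ => V r θ * wN θ) volume (-Real.pi) Real.pi :=
        ((hVcont r hr).mul hwc).intervalIntegrable _ _
      have hfour := fourier_formula' c F hF U hU hr.1.le hr.2 N
      rw [if_neg hN] at hfour
      have e1 : (fun θ => (f θ - V r θ)*(1 - wN θ))
          = fun θ => (f θ - f θ * wN θ) - (V r θ - V r θ * wN θ) := by
        funext θ; ring
      rw [e1, intervalIntegral.integral_sub (i_f.sub i_fw) (i_V.sub i_Vw),
        intervalIntegral.integral_sub i_f i_fw, intervalIntegral.integral_sub i_V i_Vw,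
        hmass r hr]
      have : (∫ θ in (-Real.pi)..Real.pi, V r θ * wN θ) = Real.pi * (c N * r^N) := hfour
      rw [this, hA, hIW]
      ring
    -- eventual bound
    have hDbound : ∀ ε : ℝ, 0 < ε → ∀ᶠ r in nhdsWithin (1:ℝ) (Iio 1),
        |∫ θ in (-Real.pi)..Real.pi, (f θ - V r θ)*(1 - wN θ)| ≤ ε := by
      intro ε hε
      have hbf : Tendsto (fun i : ℕ => ((N:ℝ)^2/2*(|K|+1)) * (δ0/((i:ℝ)+1))^2)
          atTop (nhds 0) := by
        have := (hδi_tend.pow 2).const_mul ((N:ℝ)^2/2*(|K|+1))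
        simpa using this
      obtain ⟨i, hi1, hi2⟩ :=
        ((hsmall.eventually_lt_const (show (0:ℝ) < ε/8 by positivity)).and
          (hbf.eventually_lt_const (show (0:ℝ) < ε/4 by positivity))).exists
      set δ : ℝ := δ0/((i:ℝ)+1) with hδ
      have hδpos : 0 < δ := hδi_pos i
      have hδle : δ ≤ δ0 := hδi_le i
      have hδπ : δ ≤ Real.pi := by linarith
      have hright := ((hf δ Real.pi (by linarith) hδπ le_rfl
        (fun hc => absurd hc.1 (not_le.mpr hδpos))).2).eventually_lt_const
        (show (0:ℝ) < ε/8 by positivity)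
      have hleft := ((hf (-Real.pi) (-δ) le_rfl (by linarith) (by linarith)
        (fun hc => absurd hc.2 (not_le.mpr (by linarith)))).2).eventually_lt_const
        (show (0:ℝ) < ε/8 by positivity)
      filter_upwards [hev01, hright, hleft, hK] with r hr hrt hlf hK_r
      -- integrability of the integrand on subintervals
      have hgii : ∀ a b : ℝ, -Real.pi ≤ a → a ≤ b → b ≤ Real.pi →
          IntervalIntegrable (fun θ => (f θ - V r θ)*(1 - wN θ)) volume a b := by
        intro a b ha hab hb
        exact ((hfsub a b ha hab hb).sub ((hVcont r hr).intervalIntegrable a b)).mul_continuousOn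
          ((continuous_const.sub hwc).continuousOn)
      -- split the integral
      have hsp1 : (∫ θ in (-Real.pi)..(-δ), (f θ - V r θ)*(1 - wN θ))
            + (∫ θ in (-δ)..δ, (f θ - V r θ)*(1 - wN θ))
          = ∫ θ in (-Real.pi)..δ, (f θ - V r θ)*(1 - wN θ) :=
        intervalIntegral.integral_add_adjacent_intervals
          (hgii _ _ le_rfl (by linarith) (by linarith))
          (hgii _ _ (by linarith) (by linarith) (by linarith))
      have hsp2 : (∫ θ in (-Real.pi)..δ, (f θ - V r θ)*(1 - wN θ))
            + (∫ θ in δ..Real.pi, (f θ - V r θ)*(1 - wN θ))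
          = ∫ θ in (-Real.pi)..Real.pi, (f θ - V r θ)*(1 - wN θ) :=
        intervalIntegral.integral_add_adjacent_intervals
          (hgii _ _ le_rfl (by linarith) (by linarith))
          (hgii _ _ (by linarith) (by linarith) le_rfl)
      -- bound on outer intervals
      have houter : ∀ a b : ℝ, -Real.pi ≤ a → a ≤ b → b ≤ Real.pi →
          (∫ θ in a..b, |V r θ - f θ|) < ε/8 →
          |∫ θ in a..b, (f θ - V r θ)*(1 - wN θ)| ≤ ε/4 := by
        intro a b ha hab hb hsmallint
        have habii : IntervalIntegrable (fun θ => |V r θ - f θ|) volume a b :=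
          (((hVcont r hr).intervalIntegrable a b).sub (hfsub a b ha hab hb)).abs
        calc |∫ θ in a..b, (f θ - V r θ)*(1 - wN θ)|
            ≤ ∫ θ in a..b, |(f θ - V r θ)*(1 - wN θ)| :=
              intervalIntegral.abs_integral_le_integral_abs hab
          _ ≤ ∫ θ in a..b, 2 * |V r θ - f θ| := by
              refine intervalIntegral.integral_mono_on hab ((hgii a b ha hab hb).abs)
                (habii.const_mul 2) (fun θ _ => ?_)
              rw [abs_mul]
              have hb1 : |1 - wN θ| ≤ 2 := by
                rw [abs_le]
                constructor <;>
                  [linarith [Real.cos_le_one ((N:ℝ)*θ)]; linarith [Real.neg_one_le_cos ((N:ℝ)*θ)]]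
              calc |f θ - V r θ| * |1 - wN θ| ≤ |f θ - V r θ| * 2 :=
                    mul_le_mul_of_nonneg_left hb1 (abs_nonneg _)
                _ = 2 * |V r θ - f θ| := by rw [abs_sub_comm]; ring
          _ = 2 * ∫ θ in a..b, |V r θ - f θ| := intervalIntegral.integral_const_mul 2 _
          _ ≤ 2 * (ε/8) := by linarith [hsmallint]
          _ = ε/4 := by ring
      have hI1 := houter (-Real.pi) (-δ) le_rfl (by linarith) (by linarith) hlf
      have hI3 := houter δ Real.pi (by linarith) hδπ le_rfl hrt
      -- bound on the middle interval
      have hI2 : |∫ θ in (-δ)..δ, (f θ - V r θ)*(1 - wN θ)| ≤ ε/4 + ε/4 := by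
        have hfabs : IntervalIntegrable (fun θ => |f θ|) volume (-δ) δ :=
          (hfsub _ _ (by linarith) (by linarith) (by linarith)).abs
        have hVabs : IntervalIntegrable (fun θ => |V r θ|) volume (-δ) δ :=
          ((hVcont r hr).intervalIntegrable _ _).abs
        have hcoef : (0:ℝ) ≤ (N:ℝ)^2*δ^2/2 := by positivity
        calc |∫ θ in (-δ)..δ, (f θ - V r θ)*(1 - wN θ)|
            ≤ ∫ θ in (-δ)..δ, |(f θ - V r θ)*(1 - wN θ)| :=
              intervalIntegral.abs_integral_le_integral_abs (by linarith)
          _ ≤ ∫ θ in (-δ)..δ, (2*|f θ| + ((N:ℝ)^2*δ^2/2)*|V r θ|) := by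
              refine intervalIntegral.integral_mono_on (by linarith)
                ((hgii _ _ (by linarith) (by linarith) (by linarith)).abs)
                ((hfabs.const_mul 2).add (hVabs.const_mul _)) (fun θ hθ => ?_)
              have hw0 : 0 ≤ 1 - wN θ := by
                have := Real.cos_le_one ((N:ℝ)*θ); simp only [hwN]; linarith
              have hw2 : 1 - wN θ ≤ 2 := by
                have := Real.neg_one_le_cos ((N:ℝ)*θ); simp only [hwN]; linarith
              have hwq : 1 - wN θ ≤ (N:ℝ)^2*δ^2/2 := by
                have h1 := Real.one_sub_sq_div_two_le_cos (x := (N:ℝ)*θ)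
                have h2 : ((N:ℝ)*θ)^2 ≤ (N:ℝ)^2*δ^2 := by
                  have habsθ : |θ| ≤ δ := abs_le.mpr ⟨hθ.1, hθ.2⟩
                  have hθsq : θ^2 ≤ δ^2 := by nlinarith [sq_abs θ, abs_nonneg θ]
                  nlinarith [sq_nonneg (N:ℝ)]
                simp only [hwN]
                nlinarith
              rw [abs_mul, abs_of_nonneg hw0]
              calc |f θ - V r θ| * (1 - wN θ) ≤ (|f θ| + |V r θ|) * (1 - wN θ) :=
                    mul_le_mul_of_nonneg_right (abs_sub _ _) hw0
                _ = |f θ| * (1 - wN θ) + |V r θ| * (1 - wN θ) := by ring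
                _ ≤ 2*|f θ| + ((N:ℝ)^2*δ^2/2)*|V r θ| := by
                    have e1 : |f θ| * (1 - wN θ) ≤ |f θ| * 2 :=
                      mul_le_mul_of_nonneg_left hw2 (abs_nonneg _)
                    have e2 : |V r θ| * (1 - wN θ) ≤ |V r θ| * ((N:ℝ)^2*δ^2/2) :=
                      mul_le_mul_of_nonneg_left hwq (abs_nonneg _)
                    nlinarith [abs_nonneg (f θ), abs_nonneg (V r θ)]
          _ = 2*(∫ θ in (-δ)..δ, |f θ|) + ((N:ℝ)^2*δ^2/2)*(∫ θ in (-δ)..δ, |V r θ|) := by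
              rw [intervalIntegral.integral_add (hfabs.const_mul 2) (hVabs.const_mul _),
                intervalIntegral.integral_const_mul, intervalIntegral.integral_const_mul]
          _ ≤ 2*(ε/8) + ((N:ℝ)^2*δ^2/2)*(∫ θ in (-δ0)..δ0, |V r θ|) := by
              have hmono : (∫ θ in (-δ)..δ, |V r θ|) ≤ ∫ θ in (-δ0)..δ0, |V r θ| :=
                intervalIntegral.integral_mono_interval (by linarith) (by linarith) (by linarith)
                  (Eventually.of_forall (fun θ => abs_nonneg _)) ((hVii r hr _ _).abs)
              have hint_nonneg : (0:ℝ) ≤ ∫ θ in (-δ)..δ, |f θ| :=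
                intervalIntegral.integral_nonneg (by linarith) (fun θ _ => abs_nonneg _)
              nlinarith
          _ ≤ ε/4 + ((N:ℝ)^2*δ^2/2)*(|K|+1) := by
              have hVnonneg : (0:ℝ) ≤ ∫ θ in (-δ0)..δ0, |V r θ| :=
                intervalIntegral.integral_nonneg (by linarith) (fun θ _ => abs_nonneg _)
              have : (∫ θ in (-δ0)..δ0, |V r θ|) ≤ |K|+1 := by
                calc (∫ θ in (-δ0)..δ0, |V r θ|) ≤ K := hK_r
                  _ ≤ |K|+1 := by have hKabs := le_abs_self K; linarith
              nlinarith
          _ ≤ ε/4 + ε/4 := by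
              have : ((N:ℝ)^2/2*(|K|+1)) * δ^2 < ε/4 := hi2
              nlinarith
      calc |∫ θ in (-Real.pi)..Real.pi, (f θ - V r θ)*(1 - wN θ)|
          ≤ |∫ θ in (-Real.pi)..(-δ), (f θ - V r θ)*(1 - wN θ)|
            + |∫ θ in (-δ)..δ, (f θ - V r θ)*(1 - wN θ)|
            + |∫ θ in δ..Real.pi, (f θ - V r θ)*(1 - wN θ)| := by
            rw [← hsp2, ← hsp1]
            exact (abs_add_le _ _).trans (add_le_add_left (abs_add_le _ _) _)
        _ ≤ ε/4 + (ε/4 + ε/4) + ε/4 := by linarith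
        _ = ε := by ring
    -- conclude
    have hpow : Tendsto (fun r : ℝ => Real.pi*(c N * r^N) - (A + IW))
        (nhdsWithin (1:ℝ) (Iio 1)) (nhds (Real.pi * c N - (A + IW))) := by
      have h1 : Tendsto (fun r : ℝ => r^N) (nhdsWithin (1:ℝ) (Iio 1)) (nhds 1) := by
        have := ((continuous_pow N).tendsto 1).mono_left
          (nhdsWithin_le_nhds (s := Iio (1:ℝ)))
        simpa using this
      have h2 := (h1.const_mul (Real.pi * c N)).sub_const (A + IW)
      simp only [mul_one] at h2
      refine h2.congr (fun r => by ring)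
    have hL : Tendsto (fun r : ℝ => ∫ θ in (-Real.pi)..Real.pi, (f θ - V r θ)*(1 - wN θ))
        (nhdsWithin (1:ℝ) (Iio 1)) (nhds (Real.pi * c N - (A + IW))) := by
      refine hpow.congr' ?_
      filter_upwards [hev01] with r hr
      exact hDeq r hr
    have habs : ∀ ε : ℝ, 0 < ε → |Real.pi * c N - (A + IW)| ≤ ε := by
      intro ε hε
      exact le_of_tendsto hL.abs (hDbound ε hε)
    have hzero : Real.pi * c N - (A + IW) = 0 := by
      by_contra hne
      have hpos : 0 < |Real.pi * c N - (A + IW)| := abs_pos.mpr hne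
      have := habs (|Real.pi * c N - (A + IW)|/2) (by positivity)
      linarith
    have := sub_eq_zero.mp hzero
    rw [this, hA, hIW]
  -- final assembly
  set A : ℝ := 2*Real.pi*c 0 - ∫ θ in (-Real.pi)..Real.pi, f θ with hA
  have hRL := riemann_lebesgue_cos hfint
  have hca : Tendsto c atTop (nhds (A/Real.pi)) := by
    have h1 : Tendsto (fun N : ℕ => (A + ∫ θ in (-Real.pi)..Real.pi, f θ * Real.cos (N*θ))
        /Real.pi) atTop (nhds ((A + 0)/Real.pi)) := (hRL.const_add A).div_const Real.pi
    rw [add_zero] at h1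
    refine h1.congr' ?_
    filter_upwards [eventually_ge_atTop 1] with N hN
    have := hid N (by omega)
    rw [div_eq_iff (ne_of_gt hπ)]
    linarith
  refine ⟨A/Real.pi, hca, ?_⟩
  have habel := abel_limit hca
  refine habel.congr' ?_
  filter_upwards [hev01] with r hr
  have h := U_hasSum' c F hF U hU (θ := 0) hr.1.le hr.2
  simp only [Complex.ofReal_zero, zero_mul, Complex.exp_zero, mul_one, mul_zero,
    Real.cos_zero] at h
  rw [← h.tsum_eq]
end

section
/- (Kolmogorov–Erdős–Feller–Pollard renewal theorem.) Let (p_n)_{n≥1} be a sequence of non-negative reals with Σ_{n=1}^∞ p_n = 1 and gcd{n ≥ 1 : p_n ≠ 0} = 1. Define (q_n)_{n≥0} by q_0 = 1 and q_n = Σ_{k=1}^n p_k q_{n−k} for n ≥ 1. Then q_n → 1 / Σ_{n=1}^∞ n p_n as n → ∞, where the limit is interpreted as 0 when Σ_{n=1}^∞ n p_n = ∞. -/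
open Filter Finset

lemma efp_limsup_facts (Q : ℕ → ℝ) (h0 : ∀ n, 0 ≤ Q n) (h1 : ∀ n, Q n ≤ 1) :
    0 ≤ limsup Q atTop ∧ limsup Q atTop ≤ 1 ∧
    (∀ ε > 0, ∀ᶠ n in atTop, Q n < limsup Q atTop + ε) ∧
    ∃ φ : ℕ → ℕ, StrictMono φ ∧
      Tendsto (fun j => Q (φ j)) atTop (nhds (limsup Q atTop)) := by
  have hbdd : IsBoundedUnder (· ≤ ·) atTop Q := isBoundedUnder_of ⟨1, h1⟩
  have hbdd' : IsBoundedUnder (· ≥ ·) atTop Q := isBoundedUnder_of ⟨0, h0⟩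
  have hcob : IsCoboundedUnder (· ≤ ·) atTop Q := hbdd'.isCoboundedUnder_le
  set L := limsup Q atTop with hL
  have hL0 : 0 ≤ L := le_limsup_of_frequently_le (Frequently.of_forall h0) hbdd
  have hL1 : L ≤ 1 := limsup_le_of_le hcob (Eventually.of_forall h1)
  have hup : ∀ ε > 0, ∀ᶠ n in atTop, Q n < L + ε := by
    intro ε hε
    exact eventually_lt_of_limsup_lt (by linarith) hbdd
  refine ⟨hL0, hL1, hup, ?_⟩
  have hfreq : ∀ j : ℕ, ∃ᶠ k in atTop, |Q k - L| < 1 / (j + 1) := by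
    intro j
    have hpos : (0:ℝ) < 1 / (j + 1) := by positivity
    have h1' : ∃ᶠ k in atTop, L - 1 / (j+1) < Q k :=
      frequently_lt_of_lt_limsup hcob (by linarith)
    have h2' : ∀ᶠ k in atTop, Q k < L + 1 / (j+1) := hup _ hpos
    refine (h1'.and_eventually h2').mono ?_
    rintro k ⟨hk1, hk2⟩
    rw [abs_lt]
    constructor <;> linarith
  obtain ⟨φ, hφ, hφ2⟩ := extraction_forall_of_frequently hfreq
  refine ⟨φ, hφ, ?_⟩
  rw [tendsto_iff_dist_tendsto_zero]
  refine squeeze_zero (fun j => dist_nonneg) (fun j => ?_) 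
    tendsto_one_div_add_atTop_nhds_zero_nat
  rw [Real.dist_eq]
  exact le_of_lt (hφ2 j)

-- helper : sums over Icc 1 n of functions vanishing at 0
lemma efp_Icc_sum (f : ℕ → ℝ) (hf0 : f 0 = 0) (n : ℕ) :
    ∑ k ∈ Finset.Icc 1 n, f k = ∑ k ∈ Finset.range (n+1), f k := by
  have h : Finset.range (n+1) = insert 0 (Finset.Icc 1 n) := by
    ext x
    simp only [Finset.mem_range, Finset.mem_insert, Finset.mem_Icc]
    omega
  rw [h, Finset.sum_insert (by simp), hf0, zero_add]

lemma efp_spread (p : ℕ → ℝ) (hp : ∀ n, 0 ≤ p n) (hp0 : p 0 = 0) (hsumm : Summable p)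
    (hsum1 : ∑' n, p n = 1)
    (Q : ℕ → ℝ) (hQ0 : ∀ n, 0 ≤ Q n) (hQ1 : ∀ n, Q n ≤ 1)
    (hrec : ∀ ε > 0, ∀ᶠ n in atTop, Q n ≤ (∑ k ∈ Finset.Icc 1 n, p k * Q (n - k)) + ε)
    (L : ℝ) (hL0 : 0 ≤ L) (hL1 : L ≤ 1)
    (hup : ∀ ε > 0, ∀ᶠ n in atTop, Q n < L + ε)
    (ψ : ℕ → ℕ) (hψ : Tendsto ψ atTop atTop)
    (hconv : Tendsto (fun j => Q (ψ j)) atTop (nhds L))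
    (m : ℕ) (hm : p m ≠ 0) :
    Tendsto (fun j => Q (ψ j - m)) atTop (nhds L) := by
  have hpm : 0 < p m := (hp m).lt_of_ne (Ne.symm hm)
  have hm1 : 1 ≤ m := by
    by_contra h
    push_neg at h
    interval_cases m
    exact hm hp0
  have hpsum : ∀ n, ∑ k ∈ Finset.range n, p k ≤ 1 := by
    intro n
    rw [← hsum1]
    exact hsumm.sum_le_tsum _ (fun k _ => hp k)
  rw [Metric.tendsto_nhds]
  intro ε hε
  set ε' := p m * ε / 8 with hε'def
  have hε' : 0 < ε' := by positivity
  -- choose M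
  have htend : Tendsto (fun n => ∑ k ∈ Finset.range n, p k) atTop (nhds 1) := by
    have h := hsumm.hasSum.tendsto_sum_nat
    rwa [hsum1] at h
  obtain ⟨M₀, hM₀⟩ := (htend.eventually (eventually_gt_nhds (show 1 - ε' < 1 by linarith))).exists_forall_of_atTop
  set M := max M₀ m with hMdef
  have hmM : m ≤ M := le_max_right _ _
  have hW : 1 - ε' < ∑ k ∈ Finset.range (M+1), p k := hM₀ _ (by omega)
  -- eventual facts
  obtain ⟨n₁, hn₁⟩ := (hrec ε' hε').exists_forall_of_atTop
  obtain ⟨n₂, hn₂⟩ := (hup ε' hε').exists_forall_of_atTop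
  obtain ⟨n₃, hn₃⟩ := (hup (ε/2) (by linarith)).exists_forall_of_atTop
  have hev : ∀ᶠ j in atTop, ψ j ≥ n₁ + n₂ + n₃ + M + m + 1 := hψ.eventually_ge_atTop _
  have hconv' : ∀ᶠ j in atTop, L - ε' < Q (ψ j) := by
    have := hconv.eventually (eventually_gt_nhds (show L - ε' < L by linarith))
    exact this
  filter_upwards [hev, hconv'] with j hj hQj
  set n := ψ j with hn
  have hnM : M + 1 ≤ n := by omega
  -- the recursion bound at n
  have h1 : Q n ≤ (∑ k ∈ Finset.Icc 1 n, p k * Q (n - k)) + ε' := hn₁ n (by omega)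
  -- split the sum at M
  have hsplit : ∑ k ∈ Finset.Icc 1 n, p k * Q (n - k)
      = (∑ k ∈ Finset.Icc 1 M, p k * Q (n - k)) + ∑ k ∈ Finset.Ioc M n, p k * Q (n - k) := by
    have : Finset.Icc 1 n = Finset.Ioc 0 n := by rw [← Finset.Icc_add_one_left_eq_Ioc]; rfl
    have h2 : Finset.Icc 1 M = Finset.Ioc 0 M := by rw [← Finset.Icc_add_one_left_eq_Ioc]; rfl
    rw [this, h2, Finset.sum_Ioc_consecutive _ (Nat.zero_le M) (by omega)]
  -- tail bound
  have htail : ∑ k ∈ Finset.Ioc M n, p k * Q (n - k) ≤ ε' := by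
    have hb1 : ∑ k ∈ Finset.Ioc M n, p k * Q (n - k) ≤ ∑ k ∈ Finset.Ioc M n, p k := by
      refine Finset.sum_le_sum fun k _ => ?_
      nlinarith [hp k, hQ0 (n - k), hQ1 (n - k)]
    have hb2 : (∑ k ∈ Finset.Icc 1 M, p k) + ∑ k ∈ Finset.Ioc M n, p k
        = ∑ k ∈ Finset.Icc 1 n, p k := by
      have h2 : Finset.Icc 1 M = Finset.Ioc 0 M := by rw [← Finset.Icc_add_one_left_eq_Ioc]; rfl
      have h3 : Finset.Icc 1 n = Finset.Ioc 0 n := by rw [← Finset.Icc_add_one_left_eq_Ioc]; rfl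
      rw [h2, h3, Finset.sum_Ioc_consecutive _ (Nat.zero_le M) (by omega)]
    have hb3 : ∑ k ∈ Finset.Icc 1 n, p k ≤ 1 := by
      rw [efp_Icc_sum p hp0]
      exact hpsum _
    have hb4 : 1 - ε' < ∑ k ∈ Finset.Icc 1 M, p k := by
      rw [efp_Icc_sum p hp0]
      exact hW
    linarith
  -- middle sum : separate the term k = m
  have hmem : m ∈ Finset.Icc 1 M := Finset.mem_Icc.mpr ⟨hm1, hmM⟩
  have hmid : ∑ k ∈ Finset.Icc 1 M, p k * Q (n - k)
      = (∑ k ∈ (Finset.Icc 1 M).erase m, p k * Q (n - k)) + p m * Q (n - m) :=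
    (Finset.sum_erase_add _ _ hmem).symm
  have hWm : ∑ k ∈ (Finset.Icc 1 M).erase m, p k
      = (∑ k ∈ Finset.Icc 1 M, p k) - p m := by
    rw [Finset.sum_erase_eq_sub hmem]
  have hWle : ∑ k ∈ Finset.Icc 1 M, p k ≤ 1 := by
    rw [efp_Icc_sum p hp0]; exact hpsum _
  have herase : ∑ k ∈ (Finset.Icc 1 M).erase m, p k * Q (n - k)
      ≤ ((∑ k ∈ Finset.Icc 1 M, p k) - p m) * (L + ε') := by
    rw [← hWm, Finset.sum_mul]
    refine Finset.sum_le_sum fun k hk => ?_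
    have hk' : k ∈ Finset.Icc 1 M := Finset.mem_of_mem_erase hk
    have hkM : k ≤ M := (Finset.mem_Icc.mp hk').2
    have hQk : Q (n - k) < L + ε' := hn₂ (n - k) (by omega)
    nlinarith [hp k, hQ0 (n - k)]
  -- conclude the lower bound on Q (n - m)
  have hlow : L - ε/2 < Q (n - m) := by
    have hprod : ((∑ k ∈ Finset.Icc 1 M, p k) - p m) * (L + ε') ≤ (1 - p m) * (L + ε') := by
      have hpm1 : p m ≤ ∑ k ∈ Finset.Icc 1 M, p k :=
        Finset.single_le_sum (fun k _ => hp k) hmem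
      nlinarith
    have : L - ε' < (1 - p m) * (L + ε') + p m * Q (n - m) + ε' + ε' := by
      calc L - ε' < Q n := hQj
        _ ≤ (∑ k ∈ Finset.Icc 1 n, p k * Q (n - k)) + ε' := h1
        _ = (∑ k ∈ (Finset.Icc 1 M).erase m, p k * Q (n - k)) + p m * Q (n - m)
            + (∑ k ∈ Finset.Ioc M n, p k * Q (n - k)) + ε' := by
              rw [hsplit, hmid]
        _ ≤ ((∑ k ∈ Finset.Icc 1 M, p k) - p m) * (L + ε') + p m * Q (n - m) + ε' + ε' := by
              linarith
        _ ≤ (1 - p m) * (L + ε') + p m * Q (n - m) + ε' + ε' := by linarith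
    -- p m * Q (n-m) > p m * L - 4 ε'
    have h4 : p m * L - 4 * ε' < p m * Q (n - m) := by nlinarith
    rw [hε'def] at h4
    nlinarith
  have hhigh : Q (n - m) < L + ε/2 := hn₃ (n - m) (by omega)
  rw [Real.dist_eq, abs_lt]
  constructor <;> [linarith; linarith]
lemma efp_spread_list (p : ℕ → ℝ) (hp : ∀ n, 0 ≤ p n) (hp0 : p 0 = 0) (hsumm : Summable p)
    (hsum1 : ∑' n, p n = 1)
    (Q : ℕ → ℝ) (hQ0 : ∀ n, 0 ≤ Q n) (hQ1 : ∀ n, Q n ≤ 1)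
    (hrec : ∀ ε > 0, ∀ᶠ n in atTop, Q n ≤ (∑ k ∈ Finset.Icc 1 n, p k * Q (n - k)) + ε)
    (L : ℝ) (hL0 : 0 ≤ L) (hL1 : L ≤ 1)
    (hup : ∀ ε > 0, ∀ᶠ n in atTop, Q n < L + ε)
    (l : List ℕ) :
    (∀ x ∈ l, p x ≠ 0) → ∀ ψ : ℕ → ℕ, Tendsto ψ atTop atTop →
      Tendsto (fun j => Q (ψ j)) atTop (nhds L) →
      Tendsto (fun j => Q (ψ j - l.sum)) atTop (nhds L) := by
  induction l with
  | nil => intro _ ψ hψ hconv; simpa using hconv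
  | cons a t ih =>
    intro hl ψ hψ hconv
    have ht : ∀ x ∈ t, p x ≠ 0 := fun x hx => hl x (List.mem_cons_of_mem a hx)
    have ha : p a ≠ 0 := hl a List.mem_cons_self
    have hψ' : Tendsto (fun j => ψ j - t.sum) atTop atTop := by
      rw [tendsto_atTop]
      intro b
      filter_upwards [hψ.eventually_ge_atTop (b + t.sum)] with j hj
      omega
    have h1 := ih ht ψ hψ hconv
    have h2 := efp_spread p hp hp0 hsumm hsum1 Q hQ0 hQ1 hrec L hL0 hL1 hup
      (fun j => ψ j - t.sum) hψ' h1 a ha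
    refine h2.congr fun j => ?_
    congr 1
    simp only [List.sum_cons]
    omega

lemma efp_rep (p : ℕ → ℝ) (hp0 : p 0 = 0)
    (hgcd : ∀ d : ℕ, (∀ n : ℕ, p n ≠ 0 → d ∣ n) → d = 1) :
    ∃ N : ℕ, ∀ m : ℕ, ∃ l : List ℕ, (∀ x ∈ l, p x ≠ 0) ∧ l.sum = N + m := by
  classical
  set Rep : ℕ → Prop := fun a => ∃ l : List ℕ, (∀ x ∈ l, p x ≠ 0) ∧ l.sum = a with hRep
  have rep0 : Rep 0 := ⟨[], by simp, rfl⟩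
  have repAdd : ∀ a b, Rep a → Rep b → Rep (a + b) := by
    rintro a b ⟨la, hla, hsa⟩ ⟨lb, hlb, hsb⟩
    refine ⟨la ++ lb, ?_, by simp [hsa, hsb]⟩
    intro x hx
    rcases List.mem_append.mp hx with h | h
    · exact hla x h
    · exact hlb x h
  have repMul : ∀ k a, Rep a → Rep (k * a) := by
    intro k a ha
    induction k with
    | zero => simpa using rep0
    | succ k ih =>
      have : (k + 1) * a = k * a + a := by ring
      rw [this]
      exact repAdd _ _ ih ha
  -- the subgroup of ℤ of differences of representable numbers
  set G : AddSubgroup ℤ :=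
    { carrier := {z : ℤ | ∃ A B : ℕ, Rep A ∧ Rep B ∧ z = (A : ℤ) - (B : ℤ)}
      zero_mem' := ⟨0, 0, rep0, rep0, by simp⟩
      add_mem' := by
        rintro x y ⟨A, B, hA, hB, rfl⟩ ⟨A', B', hA', hB', rfl⟩
        exact ⟨A + A', B + B', repAdd _ _ hA hA', repAdd _ _ hB hB', by push_cast; ring⟩
      neg_mem' := by
        rintro x ⟨A, B, hA, hB, rfl⟩
        exact ⟨B, A, hB, hA, by push_cast; ring⟩ } with hG
  obtain ⟨g, hg⟩ := Int.subgroup_cyclic G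
  have hdvd : ∀ n : ℕ, p n ≠ 0 → g.natAbs ∣ n := by
    intro n hn
    have hnG : (n : ℤ) ∈ G := ⟨n, 0, ⟨[n], by simpa using hn, by simp⟩, rep0, by simp⟩
    rw [hg, AddSubgroup.mem_closure_singleton] at hnG
    obtain ⟨k, hk⟩ := hnG
    have : g ∣ (n : ℤ) := Dvd.intro_left k (by rw [← hk]; simp [smul_eq_mul])
    exact Int.ofNat_dvd.mp (Int.natAbs_dvd.mpr this)
  have hg1 : g.natAbs = 1 := hgcd _ hdvd
  have h1G : (1 : ℤ) ∈ G := by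
    rw [hg, AddSubgroup.mem_closure_singleton]
    rcases Int.natAbs_eq_iff.mp hg1 with h | h
    · exact ⟨1, by simp [h]⟩
    · exact ⟨-1, by simp [h]⟩
  obtain ⟨A, B, hA, hB, hAB⟩ := h1G
  have hABeq : A = B + 1 := by omega
  rcases Nat.eq_zero_or_pos B with hB0 | hB0
  · -- A = 1 is representable
    refine ⟨0, fun m => ?_⟩
    have : Rep (m * A) := repMul m A hA
    rw [hABeq, hB0] at this
    simpa using this
  · refine ⟨B * B, fun m => ?_⟩
    set n := B * B + m with hn
    set qq := n / B with hqq
    set rr := n % B with hrr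
    have hrrB : rr < B := Nat.mod_lt _ hB0
    have hqqB : B ≤ qq := Nat.le_div_iff_mul_le hB0 |>.mpr (by omega)
    have hrep : Rep ((qq - rr) * B + rr * A) :=
      repAdd _ _ (repMul _ _ hB) (repMul _ _ hA)
    have hdm : B * qq + rr = n := Nat.div_add_mod n B
    have heq : (qq - rr) * B + rr * A = n := by
      rw [hABeq]
      have h2 : rr ≤ qq := le_of_lt (lt_of_lt_of_le hrrB hqqB)
      calc (qq - rr) * B + rr * (B + 1) = (qq - rr) * B + rr * B + rr := by ring
        _ = ((qq - rr) + rr) * B + rr := by ring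
        _ = qq * B + rr := by rw [Nat.sub_add_cancel h2]
        _ = n := by rw [mul_comm]; exact hdm
    rw [heq] at hrep
    exact hrep

lemma efp_tsum_tail (P : ℕ → ENNReal) :
    ∑' k : ℕ, ∑' i : ℕ, P (i + (k+1)) = ∑' n : ℕ, (n : ENNReal) * P n := by
  have h1 : ∀ k : ℕ, ∑' i : ℕ, P (i + (k+1)) =
      ∑' n : ℕ, if k + 1 ≤ n then P n else 0 := by
    intro k
    have hinj : Function.Injective (fun i : ℕ => i + (k+1)) := add_left_injective (k+1)
    have := Function.Injective.tsum_eq (f := fun n => if k + 1 ≤ n then P n else 0) hinj ?_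
    · rw [← this]
      refine tsum_congr fun i => ?_
      simp
    · intro n hn
      have hkn : k + 1 ≤ n := by
        by_contra h
        simp [if_neg h] at hn
        exact absurd hn.1 (by omega)
      exact ⟨n - (k+1), by show n - (k+1) + (k+1) = n; omega⟩
  calc ∑' k : ℕ, ∑' i : ℕ, P (i + (k+1))
      = ∑' k : ℕ, ∑' n : ℕ, if k + 1 ≤ n then P n else 0 := tsum_congr h1
    _ = ∑' n : ℕ, ∑' k : ℕ, if k + 1 ≤ n then P n else 0 := ENNReal.tsum_comm
    _ = ∑' n : ℕ, (n : ENNReal) * P n := by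
      refine tsum_congr fun n => ?_
      have : ∑' k : ℕ, (if k + 1 ≤ n then P n else 0) =
          ∑ k ∈ Finset.range n, (if k + 1 ≤ n then P n else 0) :=
        tsum_eq_sum (fun k hk => by
          rw [Finset.mem_range, not_lt] at hk
          rw [if_neg (by omega)])
      rw [this]
      have : ∀ k ∈ Finset.range n, (if k + 1 ≤ n then P n else 0) = P n := by
        intro k hk
        rw [Finset.mem_range] at hk
        rw [if_pos (by omega)]
      rw [Finset.sum_congr rfl this, Finset.sum_const, Finset.card_range, nsmul_eq_mul]
/-- The Kolmogorov–Erdős–Feller–Pollard renewal theorem: if `(pₙ)` is a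
probability distribution on `{1, 2, ...}` whose support has gcd `1`, and the
renewal sequence `(qₙ)` is defined by `q₀ = 1`, `qₙ = Σ_{k=1}^n p_k q_{n-k}`,
then `qₙ → 1 / Σ n pₙ` (the limit being `0` when the mean `Σ n pₙ` is infinite,
in accordance with the junk value `1/0 = 0` and the fact that `∑'` of a
divergent nonnegative series is `0`). -/
theorem kolmogorov_erdos_feller_pollard (p : ℕ → ℝ)
    (hp : ∀ n, 0 ≤ p n) (hp0 : p 0 = 0)
    (hsum : ∑' n : ℕ, p n = 1)
    (hgcd : ∀ d : ℕ, (∀ n : ℕ, p n ≠ 0 → d ∣ n) → d = 1)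
    (q : ℕ → ℝ) (hq0 : q 0 = 1)
    (hq : ∀ n : ℕ, 1 ≤ n → q n = ∑ k ∈ Finset.Icc 1 n, p k * q (n - k)) :
    Tendsto q atTop (nhds (1 / ∑' n : ℕ, (n : ℝ) * p n)) := by
  classical
  have hsumm : Summable p := by
    by_contra h
    rw [tsum_eq_zero_of_not_summable h] at hsum
    norm_num at hsum
  have hq01 : ∀ n, 0 ≤ q n ∧ q n ≤ 1 := by
    intro n
    induction n using Nat.strong_induction_on with
    | _ n ih =>
      rcases Nat.eq_zero_or_pos n with h0 | h0
      · subst h0; simp [hq0]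
      · rw [hq n h0]
        constructor
        · refine Finset.sum_nonneg fun k hk => ?_
          have hk' := Finset.mem_Icc.mp hk
          exact mul_nonneg (hp k) ((ih (n - k) (by omega)).1)
        · calc ∑ k ∈ Finset.Icc 1 n, p k * q (n - k)
              ≤ ∑ k ∈ Finset.Icc 1 n, p k := by
                refine Finset.sum_le_sum fun k hk => ?_
                have hk' := Finset.mem_Icc.mp hk
                have h2 := ih (n - k) (by omega)
                nlinarith [hp k, h2.1, h2.2]
          _ ≤ 1 := by
            rw [efp_Icc_sum p hp0, ← hsum]
            exact hsumm.sum_le_tsum _ (fun k _ => hp k)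
  have hq0' : ∀ n, 0 ≤ q n := fun n => (hq01 n).1
  have hq1' : ∀ n, q n ≤ 1 := fun n => (hq01 n).2
  -- the tail sequence r
  set r : ℕ → ℝ := fun k => ∑' i, p (i + (k+1)) with hrdef
  have hrs : ∀ k, Summable (fun i => p (i + (k+1))) := fun k =>
    (summable_nat_add_iff (k+1)).2 hsumm
  have hr0 : ∀ k, 0 ≤ r k := fun k => tsum_nonneg fun i => hp _
  have hr_zero : r 0 = 1 := by
    have h := hsumm.tsum_eq_zero_add
    rw [hp0, zero_add, hsum] at h
    have h2 : r 0 = ∑' i, p (i + 1) := by simp [hrdef]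
    rw [h2, ← h]
  have hr_rec : ∀ k, r k = p (k+1) + r (k+1) := by
    intro k
    have h := (hrs k).tsum_eq_zero_add
    have e1 : ∀ i : ℕ, (i + 1) + (k + 1) = i + (k + 1 + 1) := fun i => by omega
    rw [hrdef]
    simp only []
    rw [h, zero_add]
    congr 1
    exact tsum_congr fun i => by rw [e1 i]
  -- the renewal identity
  have hident : ∀ n, ∑ k ∈ Finset.range (n+1), r k * q (n - k) = 1 := by
    intro n
    induction n with
    | zero => simp [hr_zero, hq0]
    | succ n ih =>
      have hq2 : ∑ k ∈ Finset.range (n+1), p (k+1) * q (n - k) = q (n+1) := by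
        rw [hq (n+1) (by omega),
          efp_Icc_sum (fun k => p k * q (n+1-k)) (by simp [hp0]) (n+1),
          Finset.sum_range_succ' (fun k => p k * q (n+1-k)) (n+1)]
        simp [hp0, Nat.succ_sub_succ]
      rw [Finset.sum_range_succ' (fun k => r k * q (n + 1 - k)) (n+1)]
      have e : ∀ k, r (k+1) * q (n + 1 - (k+1)) = r k * q (n-k) - p (k+1) * q (n-k) := by
        intro k
        have h3 : n + 1 - (k + 1) = n - k := by omega
        rw [h3, hr_rec k]
        ring
      rw [Finset.sum_congr rfl (fun k _ => e k), Finset.sum_sub_distrib, hq2]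
      simp only [Nat.sub_zero, hr_zero, one_mul]
      linarith [ih]
  -- recursion inequalities for q and 1 - q
  have hrecq : ∀ ε > 0, ∀ᶠ n in atTop,
      q n ≤ (∑ k ∈ Finset.Icc 1 n, p k * q (n - k)) + ε := by
    intro ε hε
    filter_upwards [eventually_ge_atTop 1] with n hn
    rw [← hq n hn]
    linarith
  have hWt : Tendsto (fun n => ∑ k ∈ Finset.Icc 1 n, p k) atTop (nhds 1) := by
    have h1 : Tendsto (fun n => ∑ k ∈ Finset.range (n+1), p k) atTop (nhds 1) := by
      have h := hsumm.hasSum.tendsto_sum_nat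
      rw [hsum] at h
      exact h.comp (tendsto_add_atTop_nat 1)
    exact h1.congr fun n => (efp_Icc_sum p hp0 n).symm
  have hrecq' : ∀ ε > 0, ∀ᶠ n in atTop,
      (1 - q n) ≤ (∑ k ∈ Finset.Icc 1 n, p k * (1 - q (n - k))) + ε := by
    intro ε hε
    have hev := hWt.eventually (eventually_gt_nhds (show 1 - ε < 1 by linarith))
    filter_upwards [eventually_ge_atTop 1, hev] with n hn hWn
    have h3 : ∑ k ∈ Finset.Icc 1 n, p k * (1 - q (n - k))
        = (∑ k ∈ Finset.Icc 1 n, p k) - ∑ k ∈ Finset.Icc 1 n, p k * q (n - k) := by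
      rw [← Finset.sum_sub_distrib]
      exact Finset.sum_congr rfl fun k _ => by ring
    rw [h3, ← hq n hn]
    linarith
  -- limsup data
  obtain ⟨hL0, hL1, hupL, φ, hφmono, hφconv⟩ := efp_limsup_facts q hq0' hq1'
  set L := limsup q atTop with hLdef
  obtain ⟨hL0', hL1', hupL', φ', hφmono', hφconv'⟩ :=
    efp_limsup_facts (fun n => 1 - q n) (fun n => by show (0:ℝ) ≤ 1 - q n; linarith [hq1' n])
      (fun n => by show 1 - q n ≤ (1:ℝ); linarith [hq0' n])
  set L' := limsup (fun n => 1 - q n) atTop with hL'def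
  obtain ⟨N, hN⟩ := efp_rep p hp0 hgcd
  have hΦ : Tendsto (fun j => φ j - N) atTop atTop := by
    rw [tendsto_atTop]
    intro b
    filter_upwards [(hφmono.tendsto_atTop).eventually_ge_atTop (b + N)] with j hj
    omega
  have hΦ' : Tendsto (fun j => φ' j - N) atTop atTop := by
    rw [tendsto_atTop]
    intro b
    filter_upwards [(hφmono'.tendsto_atTop).eventually_ge_atTop (b + N)] with j hj
    omega
  have hkey : ∀ k : ℕ, Tendsto (fun j => q ((φ j - N) - k)) atTop (nhds L) := by
    intro k
    obtain ⟨l, hl, hlsum⟩ := hN k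
    have h := efp_spread_list p hp hp0 hsumm hsum q hq0' hq1' hrecq L hL0 hL1 hupL l hl
      φ (hφmono.tendsto_atTop) hφconv
    rw [hlsum] at h
    refine h.congr fun j => ?_
    congr 1
    omega
  have hkey' : ∀ k : ℕ, Tendsto (fun j => q ((φ' j - N) - k)) atTop (nhds (1 - L')) := by
    intro k
    obtain ⟨l, hl, hlsum⟩ := hN k
    have h := efp_spread_list p hp hp0 hsumm hsum (fun n => 1 - q n)
      (fun n => by show (0:ℝ) ≤ 1 - q n; linarith [hq1' n])
      (fun n => by show 1 - q n ≤ (1:ℝ); linarith [hq0' n])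
      hrecq' L' hL0' hL1' hupL' l hl φ' (hφmono'.tendsto_atTop) hφconv'
    rw [hlsum] at h
    have h2 := (tendsto_const_nhds (x := (1:ℝ)) (f := atTop)).sub h
    refine h2.congr fun j => ?_
    have h4 : φ' j - (N + k) = φ' j - N - k := by omega
    rw [h4]
    ring
  -- the fundamental upper inequality
  have key1 : ∀ M : ℕ, (∑ k ∈ Finset.range M, r k) * L ≤ 1 := by
    intro M
    have hlim : Tendsto (fun j => ∑ k ∈ Finset.range M, r k * q ((φ j - N) - k)) atTop
        (nhds (∑ k ∈ Finset.range M, r k * L)) :=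
      tendsto_finset_sum _ fun k _ => (tendsto_const_nhds.mul (hkey k))
    have hev : ∀ᶠ j in atTop, ∑ k ∈ Finset.range M, r k * q ((φ j - N) - k) ≤ 1 := by
      filter_upwards [hΦ.eventually_ge_atTop M] with j hj
      calc ∑ k ∈ Finset.range M, r k * q ((φ j - N) - k)
          ≤ ∑ k ∈ Finset.range ((φ j - N) + 1), r k * q ((φ j - N) - k) := by
            refine Finset.sum_le_sum_of_subset_of_nonneg
              (Finset.range_subset_range.mpr (by omega)) ?_
            intro k _ _
            exact mul_nonneg (hr0 k) (hq0' _)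
        _ = 1 := hident _
    have h5 := le_of_tendsto hlim hev
    rwa [← Finset.sum_mul] at h5
  -- ENNReal bookkeeping for the mean
  have hPr : ∀ k, ENNReal.ofReal (r k) = ∑' i, ENNReal.ofReal (p (i + (k+1))) := fun k =>
    ENNReal.ofReal_tsum_of_nonneg (fun i => hp _) (hrs k)
  have hfub : ∑' k : ℕ, ENNReal.ofReal (r k) = ∑' n : ℕ, ENNReal.ofReal ((n:ℝ) * p n) := by
    rw [tsum_congr hPr, efp_tsum_tail (fun n => ENNReal.ofReal (p n))]
    refine tsum_congr fun n => ?_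
    rw [ENNReal.ofReal_mul (show (0:ℝ) ≤ (n:ℝ) from Nat.cast_nonneg n),
      ENNReal.ofReal_natCast]
  by_cases hμ : Summable (fun n : ℕ => (n:ℝ) * p n)
  · -- finite mean
    set μ := ∑' n : ℕ, (n:ℝ) * p n with hμdef
    have hμnneg : ∀ n : ℕ, 0 ≤ (n:ℝ) * p n := fun n => mul_nonneg (Nat.cast_nonneg n) (hp n)
    have hμ1 : 1 ≤ μ := by
      rw [← hsum, hμdef]
      refine hsumm.tsum_le_tsum (fun n => ?_) hμ
      rcases Nat.eq_zero_or_pos n with h | h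
      · simp [h, hp0]
      · have h6 : (1:ℝ) ≤ n := by exact_mod_cast h
        nlinarith [hp n]
    have hfin : ∑' n : ℕ, ENNReal.ofReal ((n:ℝ) * p n) ≠ ⊤ := by
      rw [← ENNReal.ofReal_tsum_of_nonneg hμnneg hμ]
      exact ENNReal.ofReal_ne_top
    have hrsumm : Summable r := by
      have h1 : ∑' k, ENNReal.ofReal (r k) ≠ ⊤ := by rw [hfub]; exact hfin
      have h2 := ENNReal.summable_toReal h1
      refine h2.congr fun k => ?_
      rw [ENNReal.toReal_ofReal (hr0 k)]
    have hrt : ∑' k, r k = μ := by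
      have h1 : ENNReal.ofReal (∑' k, r k) = ENNReal.ofReal μ := by
        rw [ENNReal.ofReal_tsum_of_nonneg hr0 hrsumm, hfub, hμdef,
          ENNReal.ofReal_tsum_of_nonneg hμnneg hμ]
      exact (ENNReal.ofReal_eq_ofReal_iff (tsum_nonneg hr0)
        (le_trans zero_le_one hμ1)).mp h1
    have hAlim : Tendsto (fun M => ∑ k ∈ Finset.range M, r k) atTop (nhds μ) := by
      have h7 := hrsumm.hasSum.tendsto_sum_nat
      rwa [hrt] at h7
    have hAle : ∀ M, ∑ k ∈ Finset.range M, r k ≤ μ := by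
      intro M
      rw [← hrt]
      exact hrsumm.sum_le_tsum _ (fun k _ => hr0 k)
    have hμpos : (0:ℝ) < μ := by linarith
    have hLup : L ≤ 1 / μ := by
      have h1 : μ * L ≤ 1 := le_of_tendsto (hAlim.mul_const L) (Eventually.of_forall key1)
      rw [le_div_iff₀ hμpos]
      linarith
    have key2 : ∀ M : ℕ, 1 ≤ (∑ k ∈ Finset.range M, r k) * (1 - L')
        + (μ - ∑ k ∈ Finset.range M, r k) := by
      intro M
      have hlim : Tendsto (fun j => (∑ k ∈ Finset.range M, r k * q ((φ' j - N) - k))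
          + (μ - ∑ k ∈ Finset.range M, r k)) atTop
          (nhds ((∑ k ∈ Finset.range M, r k * (1 - L'))
            + (μ - ∑ k ∈ Finset.range M, r k))) :=
        Tendsto.add (tendsto_finset_sum _ fun k _ => (tendsto_const_nhds.mul (hkey' k)))
          tendsto_const_nhds
      have hev : ∀ᶠ j in atTop, 1 ≤ (∑ k ∈ Finset.range M, r k * q ((φ' j - N) - k))
          + (μ - ∑ k ∈ Finset.range M, r k) := by
        filter_upwards [hΦ'.eventually_ge_atTop M] with j hj
        set n := φ' j - N with hn
        have hsp : ∑ k ∈ Finset.range (n+1), r k * q (n - k)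
            = (∑ k ∈ Finset.range M, r k * q (n - k))
              + ∑ k ∈ Finset.Ico M (n+1), r k * q (n - k) := by
          rw [Finset.range_eq_Ico,
            ← Finset.sum_Ico_consecutive _ (Nat.zero_le M) (show M ≤ n+1 by omega)]
          rw [Finset.range_eq_Ico]
        have htail : ∑ k ∈ Finset.Ico M (n+1), r k * q (n - k)
            ≤ μ - ∑ k ∈ Finset.range M, r k := by
          have h1 : ∑ k ∈ Finset.Ico M (n+1), r k * q (n - k)
              ≤ ∑ k ∈ Finset.Ico M (n+1), r k := by
            refine Finset.sum_le_sum fun k _ => ?_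
            nlinarith [hr0 k, hq0' (n - k), hq1' (n - k)]
          have h2 : (∑ k ∈ Finset.range M, r k) + ∑ k ∈ Finset.Ico M (n+1), r k
              = ∑ k ∈ Finset.range (n+1), r k := by
            simp only [Finset.range_eq_Ico]
            exact Finset.sum_Ico_consecutive _ (Nat.zero_le M) (by omega)
          have h3 := hAle (n+1)
          linarith
        have hid := hident n
        rw [hsp] at hid
        linarith
      have h8 := ge_of_tendsto hlim hev
      rwa [← Finset.sum_mul] at h8
    have hlow : 1 ≤ μ * (1 - L') := by
      have hlim2 : Tendsto (fun M => (∑ k ∈ Finset.range M, r k) * (1 - L')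
          + (μ - ∑ k ∈ Finset.range M, r k)) atTop (nhds (μ * (1 - L') + (μ - μ))) :=
        (hAlim.mul_const _).add (tendsto_const_nhds.sub hAlim)
      have h9 := ge_of_tendsto hlim2 (Eventually.of_forall key2)
      linarith [h9]
    have hgoal : (1:ℝ) / μ ≤ 1 - L' := by
      rw [div_le_iff₀ hμpos]
      nlinarith
    have hliminf : 1 - L' ≤ liminf q atTop := by
      by_contra hcon
      push_neg at hcon
      have hcob : IsCoboundedUnder (· ≥ ·) atTop q :=
        (isBoundedUnder_of ⟨1, hq1'⟩ : IsBoundedUnder (· ≤ ·) atTop q).isCoboundedUnder_ge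
      set c := (liminf q atTop + (1 - L')) / 2 with hc
      have h1 : liminf q atTop < c := by rw [hc]; linarith
      have h2 : c < 1 - L' := by rw [hc]; linarith
      have hfreq := frequently_lt_of_liminf_lt hcob h1
      have hev2 := hupL' (1 - L' - c) (by linarith)
      obtain ⟨n, hn1, hn2⟩ := (hfreq.and_eventually hev2).exists
      linarith
    refine tendsto_of_le_liminf_of_limsup_le ?_ ?_ ?_ ?_
    · calc (1:ℝ)/μ ≤ 1 - L' := hgoal
        _ ≤ liminf q atTop := hliminf
    · exact hLup
    · exact isBoundedUnder_of ⟨1, hq1'⟩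
    · exact isBoundedUnder_of ⟨0, hq0'⟩
  · -- infinite mean
    rw [tsum_eq_zero_of_not_summable hμ, div_zero]
    have htop : ∑' k : ℕ, ENNReal.ofReal (r k) = ⊤ := by
      rw [hfub]
      by_contra h
      apply hμ
      have h2 := ENNReal.summable_toReal h
      refine h2.congr fun n => ?_
      rw [ENNReal.toReal_ofReal (mul_nonneg (Nat.cast_nonneg n) (hp n))]
    have hAtop : Tendsto (fun M => ∑ k ∈ Finset.range M, r k) atTop atTop := by
      have h1 := ENNReal.tendsto_nat_tsum (fun k => ENNReal.ofReal (r k))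
      rw [htop] at h1
      rw [tendsto_atTop]
      intro b
      have h2 : ∀ᶠ M in atTop,
          ENNReal.ofReal b < ∑ k ∈ Finset.range M, ENNReal.ofReal (r k) :=
        h1.eventually (eventually_gt_nhds ENNReal.ofReal_lt_top)
      filter_upwards [h2] with M hM
      rw [← ENNReal.ofReal_sum_of_nonneg (fun k _ => hr0 k)] at hM
      by_contra h4
      push_neg at h4
      exact absurd hM (not_lt.mpr (ENNReal.ofReal_le_ofReal h4.le))
    have hLle : L ≤ 0 := by
      by_contra hcon
      push_neg at hcon
      obtain ⟨M, hM⟩ := (hAtop.eventually_gt_atTop (1 / L)).exists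
      have h5 : 1 < (∑ k ∈ Finset.range M, r k) * L := by
        rw [div_lt_iff₀ hcon] at hM
        linarith
      linarith [key1 M]
    refine tendsto_of_le_liminf_of_limsup_le ?_ ?_ ?_ ?_
    · refine le_liminf_of_le ?_ (Eventually.of_forall hq0')
      exact (isBoundedUnder_of ⟨1, hq1'⟩ :
        IsBoundedUnder (· ≤ ·) atTop q).isCoboundedUnder_ge
    · exact hLle
    · exact isBoundedUnder_of ⟨1, hq1'⟩
    · exact isBoundedUnder_of ⟨0, hq0'⟩
end

section
/- Let S ∈ L¹_loc[0,∞) satisfy ∫₁^∞ |S(x)|/(x^k e^x) dx < ∞ for some k ∈ ℕ, and set U(s) = Re ∫₀^∞ e^{−sx} S(x) dx for Re s > 1. Suppose there exist λ > 0 and g ∈ L¹(−λ,λ) such that U(σ+it) ≥ g(t) for a.e. t ∈ (−λ,λ) and all σ ∈ (1,2]. Then sup_{1<σ<2} ∫_{−λ/2}^{λ/2} |U(σ+it)| dt < ∞. -/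
open MeasureTheory Filter Set

/-- The Laplace transform `𝓛{S;s} = ∫₀^∞ e^{-sx} S(x) dx`. -/
noncomputable def laplaceT (S : ℝ → ℝ) (s : ℂ) : ℂ :=
  ∫ x in Ioi (0 : ℝ), Complex.exp (-s * x) * (S x : ℂ)

lemma fourier_decay {f : ℝ → ℂ} (hf : ContDiff ℝ ((⊤:ℕ∞) : WithTop ℕ∞) f) (h'f : HasCompactSupport f) (n : ℕ) :
    ∃ C : ℝ, ∀ x : ℝ, |x| ^ n * ‖FourierTransform.fourier f x‖ ≤ C := by
  have hint : ∀ (k m : ℕ), (k:ℕ∞) ≤ 0 → (m:ℕ∞) ≤ ⊤ →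
      Integrable (fun v : ℝ => ‖v‖ ^ k * ‖iteratedFDeriv ℝ m f v‖) := by
    intro k m _ _
    have hc : Continuous fun v : ℝ => ‖v‖ ^ k * ‖iteratedFDeriv ℝ m f v‖ :=
      (continuous_norm.pow k).mul (hf.continuous_iteratedFDeriv (mod_cast le_top)).norm
    have hcs : HasCompactSupport fun v : ℝ => ‖v‖ ^ k * ‖iteratedFDeriv ℝ m f v‖ :=
      ((h'f.iteratedFDeriv m).norm).mul_left
    exact hc.integrable_of_hasCompactSupport hcs
  refine ⟨(2 * Real.pi) ^ 0 * (2 * (0:ℕ) + 2) ^ n *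
      ∑ p ∈ Finset.range (0 + 1) ×ˢ Finset.range (n + 1),
        ∫ v : ℝ, ‖v‖ ^ p.1 * ‖iteratedFDeriv ℝ p.2 f v‖, fun x => ?_⟩
  have := Real.pow_mul_norm_iteratedFDeriv_fourier_le (K := 0) (N := ⊤)
    hf hint (k := 0) (n := n) le_rfl le_top x
  simpa [norm_iteratedFDeriv_zero, Real.norm_eq_abs] using this

set_option maxHeartbeats 1000000 in
/-- Remark 6.1 (first part): under the integral growth condition
`∫₁^∞ |S(x)|/(x^k eˣ) dx < ∞` and the `L¹` lower bound on `U = Re 𝓛{S;·}`,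
the `L¹` means of `U` over `(-λ/2, λ/2)` are uniformly bounded for `1 < σ < 2`. -/
theorem remark_B2_covers_Koga (S : ℝ → ℝ)
    (hS : LocallyIntegrableOn S (Ici 0))
    (k : ℕ)
    (hint : IntegrableOn (fun x : ℝ => |S x| / (x ^ k * Real.exp x)) (Ioi 1))
    (U : ℂ → ℝ) (hU : ∀ s : ℂ, U s = (laplaceT S s).re)
    (lam : ℝ) (hlam : 0 < lam)
    (g : ℝ → ℝ) (hg : IntegrableOn g (Ioo (-lam) lam))
    (hlow : ∀ σ ∈ Ioc (1 : ℝ) 2, ∀ᵐ t ∂(volume.restrict (Ioo (-lam) lam)),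
      g t ≤ U (σ + t * Complex.I)) :
    ∃ M : ℝ, ∀ σ ∈ Ioo (1 : ℝ) 2,
      (∫⁻ t in Ioo (-(lam / 2)) (lam / 2), ENNReal.ofReal |U (σ + t * Complex.I)|)
        ≤ ENNReal.ofReal M := by
  classical
  -- the bump function
  set φ : ContDiffBump (0:ℝ) := ⟨lam/2, 3*lam/4, by linarith, by linarith⟩ with hφdef
  set f : ℝ → ℂ := fun t => (φ t : ℂ) with hfdef
  have hfsm : ContDiff ℝ ((⊤:ℕ∞) : WithTop ℕ∞) f :=
    Complex.ofRealCLM.contDiff.comp (φ.contDiff (n := ⊤))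
  have hfcs : HasCompactSupport f :=
    φ.hasCompactSupport.comp_left (g := fun r : ℝ => (r:ℂ)) (by simp)
  obtain ⟨C0, hC0⟩ := fourier_decay hfsm hfcs 0
  obtain ⟨Ck, hCk⟩ := fourier_decay hfsm hfcs k
  -- notation
  set I : Set ℝ := Ioo (-(lam / 2)) (lam / 2) with hIdef
  set J : Set ℝ := Ioo (-lam) lam with hJdef
  have hIJ : I ⊆ J := by
    intro t ht
    simp only [hIdef, hJdef, mem_Ioo] at *
    constructor <;> nlinarith [ht.1, ht.2]
  -- measurability of S on (0,∞)
  have hSm : AEStronglyMeasurable S (volume.restrict (Ioi 0)) :=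
    hS.aestronglyMeasurable.mono_measure (Measure.restrict_mono Ioi_subset_Ici_self le_rfl)
  have hS1 : IntegrableOn S (Ioc 0 1) :=
    (hS.integrableOn_compact_subset (Icc_subset_Ici_self (b := (0:ℝ)) (a := 1))
      isCompact_Icc).mono_set Ioc_subset_Icc_self
  -- the dominating function G
  set Ck' : ℝ := (2 * Real.pi) ^ k * Ck with hCk'def
  set G : ℝ → ℝ := fun x => if x ≤ 1 then C0 * |S x| else Ck' * (|S x| / (x ^ k * Real.exp x))
    with hGdef
  have hGint : IntegrableOn G (Ioi 0) := by
    have h1 : IntegrableOn G (Ioc 0 1) :=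
      IntegrableOn.congr_fun (hS1.abs.const_mul C0)
        (fun x hx => by simp [hGdef, hx.2]) measurableSet_Ioc
    have h2 : IntegrableOn G (Ioi 1) :=
      IntegrableOn.congr_fun (hint.const_mul Ck')
        (fun x hx => by simp only [hGdef, if_neg (not_le.mpr (mem_Ioi.mp hx))]) measurableSet_Ioi
    simpa [Ioc_union_Ioi_eq_Ioi (zero_le_one (α := ℝ))] using h1.union h2
  set A : ℝ := ∫ x in Ioi (0:ℝ), G x with hAdef
  set M : ℝ := A + 3 * ∫ t in J, |g t| with hMdef
  refine ⟨M, fun σ hσ => ?_⟩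
  have hσ' : σ ∈ Ioc (1:ℝ) 2 := ⟨hσ.1, hσ.2.le⟩
  have hσ1 : (1:ℝ) < σ := hσ.1
  -- integrability of e^{-σx} |S| on (0,∞)
  have hexpS : IntegrableOn (fun x => Real.exp (-σ * x) * |S x|) (Ioi 0) := by
    have hm : AEStronglyMeasurable (fun x => Real.exp (-σ * x) * |S x|)
        (volume.restrict (Ioi 0)) :=
      (Real.continuous_exp.comp (continuous_const.mul continuous_id)).aestronglyMeasurable.mul
        hSm.norm
    have h1 : IntegrableOn (fun x => Real.exp (-σ * x) * |S x|) (Ioc 0 1) := by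
      apply Integrable.mono' hS1.abs
        (hm.mono_measure (Measure.restrict_mono Ioc_subset_Ioi_self le_rfl))
      filter_upwards [ae_restrict_mem measurableSet_Ioc] with x hx
      have h1 : Real.exp (-σ * x) ≤ 1 := by
        rw [Real.exp_le_one_iff]
        nlinarith [hx.1]
      have h2 := abs_nonneg (S x)
      rw [Real.norm_eq_abs, abs_of_nonneg (by positivity)]
      nlinarith [Real.exp_pos (-σ * x)]
    have h2 : IntegrableOn (fun x => Real.exp (-σ * x) * |S x|) (Ioi 1) := by
      set B : ℝ := (k.factorial : ℝ) / (σ - 1) ^ k with hBdef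
      apply Integrable.mono' (hint.const_mul B)
        (hm.mono_measure (Measure.restrict_mono (Ioi_subset_Ioi (zero_le_one (α := ℝ))) le_rfl))
      filter_upwards [ae_restrict_mem measurableSet_Ioi] with x hx
      have hx1 : (1:ℝ) < x := hx
      have hx0 : (0:ℝ) < x := by linarith
      have hσ0 : (0:ℝ) < σ - 1 := by linarith
      have hkf : (0:ℝ) < (k.factorial : ℝ) := by positivity
      have hkey : x ^ k * Real.exp (-((σ-1) * x)) ≤ B := by
        have hp := Real.pow_div_factorial_le_exp (x := (σ - 1) * x) (by positivity) k
        have h2 : (σ-1)^k * x^k ≤ (k.factorial : ℝ) * Real.exp ((σ-1)*x) := by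
          rw [div_le_iff₀ hkf, mul_pow] at hp
          linarith [hp]
        rw [hBdef, le_div_iff₀ (by positivity)]
        calc x ^ k * Real.exp (-((σ-1) * x)) * (σ - 1) ^ k
            = (σ-1)^k * x^k * Real.exp (-((σ-1)*x)) := by ring
          _ ≤ (k.factorial : ℝ) * Real.exp ((σ-1)*x) * Real.exp (-((σ-1)*x)) :=
              mul_le_mul_of_nonneg_right h2 (Real.exp_pos _).le
          _ = (k.factorial : ℝ) := by rw [mul_assoc, ← Real.exp_add]; simp
      have hSx : |S x| = |S x| / (x ^ k * Real.exp x) * (x ^ k * Real.exp x) :=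
        (div_mul_cancel₀ _ (by positivity)).symm
      have hexpc : Real.exp (-σ * x) * Real.exp x = Real.exp (-((σ-1) * x)) := by
        rw [← Real.exp_add]; ring_nf
      rw [Real.norm_eq_abs, abs_of_nonneg (by positivity)]
      calc Real.exp (-σ * x) * |S x|
          = (|S x| / (x ^ k * Real.exp x)) * (x ^ k * (Real.exp (-σ * x) * Real.exp x)) := by
            field_simp
        _ = (|S x| / (x ^ k * Real.exp x)) * (x ^ k * Real.exp (-((σ-1) * x))) := by
            rw [hexpc]
        _ ≤ (|S x| / (x ^ k * Real.exp x)) * B :=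
            mul_le_mul_of_nonneg_left hkey (by positivity)
        _ = B * (|S x| / (x ^ k * Real.exp x)) := by ring
    simpa [Ioc_union_Ioi_eq_Ioi (zero_le_one (α := ℝ))] using h1.union h2
  -- the product function and its integrability
  set F : ℝ × ℝ → ℂ := fun p =>
    (φ p.1 : ℂ) * Complex.exp (-((σ:ℂ) + p.1 * Complex.I) * p.2) * (S p.2 : ℂ) with hFdef
  have hφint : Integrable (fun t => φ t) volume :=
    φ.continuous.integrable_of_hasCompactSupport φ.hasCompactSupport
  have hnormF : ∀ p : ℝ × ℝ, ‖F p‖ = φ p.1 * (Real.exp (-σ * p.2) * |S p.2|) := by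
    intro p
    have : -(((σ:ℂ) + p.1 * Complex.I) * p.2)
        = ((-σ * p.2 : ℝ) : ℂ) + ((-(p.1 * p.2) : ℝ) : ℂ) * Complex.I := by
      push_cast; ring
    rw [hFdef]
    simp only [neg_mul, this]
    rw [Complex.exp_add]
    simp [abs_of_nonneg φ.nonneg, Complex.norm_exp, mul_assoc]

  have hFint : Integrable F ((volume : Measure ℝ).prod (volume.restrict (Ioi 0))) := by
    have hmeas : AEStronglyMeasurable F ((volume : Measure ℝ).prod (volume.restrict (Ioi 0))) := by
      have hc : Continuous fun p : ℝ × ℝ =>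
          (φ p.1 : ℂ) * Complex.exp (-((σ:ℂ) + p.1 * Complex.I) * p.2) := by
        apply Continuous.mul
        · exact Complex.continuous_ofReal.comp (φ.continuous.comp continuous_fst)
        · apply Complex.continuous_exp.comp
          exact ((continuous_const.add ((Complex.continuous_ofReal.comp
            continuous_fst).mul continuous_const)).neg).mul
            (Complex.continuous_ofReal.comp continuous_snd)
      have hs : AEStronglyMeasurable (fun p : ℝ × ℝ => (S p.2 : ℂ))
          ((volume : Measure ℝ).prod (volume.restrict (Ioi 0))) :=
        (Complex.continuous_ofReal.comp_aestronglyMeasurable hSm).comp_snd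
      exact hc.aestronglyMeasurable.mul hs
    apply Integrable.mono' (hφint.mul_prod hexpS) hmeas
    filter_upwards with p
    rw [hnormF p]
  -- the Fourier transform relation
  have hFT : ∀ x : ℝ, (∫ t : ℝ, Complex.exp (((-(t * x) : ℝ) : ℂ) * Complex.I) * f t)
      = FourierTransform.fourier f (x / (2 * Real.pi)) := by
    intro x
    rw [Real.fourier_real_eq_integral_exp_smul]
    congr 1
    funext t
    have hπ : (Real.pi : ℝ) ≠ 0 := Real.pi_ne_zero
    have harg : (-2 * Real.pi * t * (x / (2 * Real.pi)) : ℝ) = -(t * x) := by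
      field_simp
    rw [smul_eq_mul, show ((-2 * Real.pi * t * (x / (2 * Real.pi)) : ℝ) : ℂ)
      = ((-(t * x) : ℝ) : ℂ) from by rw [harg]]
  -- Fubini
  have hkey : (∫ t : ℝ, φ t * U (σ + t * Complex.I))
      = (∫ x in Ioi (0:ℝ), Complex.exp (-(σ:ℂ) * x) * (S x : ℂ)
          * FourierTransform.fourier f (x / (2 * Real.pi))).re
      ∧ Integrable (fun t => φ t * U (σ + t * Complex.I)) volume := by
    have hslice : ∀ t : ℝ, φ t * U (σ + t * Complex.I) = (∫ x in Ioi (0:ℝ), F (t, x)).re := by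
      intro t
      rw [hU, laplaceT]
      rw [← Complex.re_ofReal_mul]
      rw [← integral_const_mul]
      congr 1
      refine integral_congr_ae (Eventually.of_forall fun a => ?_)
      rw [hFdef]; ring
    have hswap := MeasureTheory.integral_integral_swap (f := fun t x => F (t, x))
      (by exact hFint)
    have hinner : ∀ x ∈ Ioi (0:ℝ), (∫ t : ℝ, F (t, x))
        = Complex.exp (-(σ:ℂ) * x) * (S x : ℂ) * FourierTransform.fourier f (x / (2 * Real.pi)) := by
      intro x _
      have hexp : ∀ t : ℝ, Complex.exp (-((σ:ℂ) + t * Complex.I) * x)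
          = Complex.exp (-(σ:ℂ) * x) * Complex.exp (((-(t * x) : ℝ) : ℂ) * Complex.I) := by
        intro t
        rw [← Complex.exp_add]
        congr 1
        push_cast
        ring
      calc (∫ t : ℝ, F (t, x))
          = ∫ t : ℝ, (Complex.exp (-(σ:ℂ) * x) * (S x : ℂ))
              * (Complex.exp (((-(t * x) : ℝ) : ℂ) * Complex.I) * f t) := by
            congr 1; ext t; rw [hFdef]; simp only; rw [hexp t, hfdef]; ring
        _ = (Complex.exp (-(σ:ℂ) * x) * (S x : ℂ))
              * ∫ t : ℝ, Complex.exp (((-(t * x) : ℝ) : ℂ) * Complex.I) * f t := by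
            rw [integral_const_mul]
        _ = Complex.exp (-(σ:ℂ) * x) * (S x : ℂ)
              * FourierTransform.fourier f (x / (2 * Real.pi)) := by rw [hFT x]
    constructor
    · calc (∫ t : ℝ, φ t * U (σ + t * Complex.I))
          = ∫ t : ℝ, (∫ x in Ioi (0:ℝ), F (t, x)).re := by
            congr 1; ext t; exact hslice t
        _ = (∫ t : ℝ, ∫ x in Ioi (0:ℝ), F (t, x)).re := by
            exact integral_re hFint.integral_prod_left
        _ = (∫ x in Ioi (0:ℝ), ∫ t : ℝ, F (t, x)).re := by rw [hswap]
        _ = (∫ x in Ioi (0:ℝ), Complex.exp (-(σ:ℂ) * x) * (S x : ℂ)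
              * FourierTransform.fourier f (x / (2 * Real.pi))).re := by
            rw [setIntegral_congr_fun measurableSet_Ioi hinner]
    · have := hFint.integral_prod_left.re
      apply this.congr
      filter_upwards with t
      exact (hslice t).symm
  obtain ⟨hkey1, hkey2⟩ := hkey
  -- the uniform bound A
  have hAbound : |∫ t : ℝ, φ t * U (σ + t * Complex.I)| ≤ A := by
    rw [hkey1]
    calc |(∫ x in Ioi (0:ℝ), Complex.exp (-(σ:ℂ) * x) * (S x : ℂ)
            * FourierTransform.fourier f (x / (2 * Real.pi))).re|
        ≤ ‖∫ x in Ioi (0:ℝ), Complex.exp (-(σ:ℂ) * x) * (S x : ℂ)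
            * FourierTransform.fourier f (x / (2 * Real.pi))‖ := Complex.abs_re_le_norm _
      _ ≤ ∫ x in Ioi (0:ℝ), ‖Complex.exp (-(σ:ℂ) * x) * (S x : ℂ)
            * FourierTransform.fourier f (x / (2 * Real.pi))‖ := norm_integral_le_integral_norm _
      _ ≤ ∫ x in Ioi (0:ℝ), G x := by
          apply integral_mono_of_nonneg
          · filter_upwards with x; positivity
          · exact hGint
          · filter_upwards [ae_restrict_mem measurableSet_Ioi] with x hx
            have hx0 : (0:ℝ) < x := hx
            have hnorm : ‖Complex.exp (-(σ:ℂ) * x) * (S x : ℂ)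
                * FourierTransform.fourier f (x / (2 * Real.pi))‖
                = Real.exp (-σ * x) * |S x| * ‖FourierTransform.fourier f (x / (2 * Real.pi))‖ := by
              rw [norm_mul, norm_mul]
              congr 2
              · rw [show (-(σ:ℂ) * x) = ((-σ * x : ℝ) : ℂ) by push_cast; ring,
                  Complex.norm_exp]
                simp
              · simp
            rw [hnorm]
            by_cases hx1 : x ≤ 1
            · rw [hGdef]
              simp only [if_pos hx1]
              have h1 : Real.exp (-σ * x) ≤ 1 := by
                rw [Real.exp_le_one_iff]; nlinarith
              have h2 := hC0 (x / (2 * Real.pi))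
              simp only [pow_zero, one_mul] at h2
              calc Real.exp (-σ * x) * |S x| * ‖FourierTransform.fourier f (x / (2 * Real.pi))‖
                  ≤ 1 * |S x| * C0 := by
                    apply mul_le_mul
                    · apply mul_le_mul_of_nonneg_right h1 (abs_nonneg _)
                    · exact h2
                    · positivity
                    · positivity
                _ = C0 * |S x| := by ring
            · push_neg at hx1
              rw [hGdef]
              simp only [if_neg (not_le.mpr hx1)]
              have hπ := Real.pi_pos
              have hFb : x ^ k * ‖FourierTransform.fourier f (x / (2 * Real.pi))‖ ≤ Ck' := by
                have h2 := hCk (x / (2 * Real.pi))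
                have habs : |x / (2 * Real.pi)| = x / (2 * Real.pi) := by
                  rw [abs_of_nonneg]; positivity
                rw [habs, div_pow] at h2
                rw [div_mul_eq_mul_div, div_le_iff₀ (by positivity)] at h2
                rw [hCk'def]
                calc x ^ k * ‖FourierTransform.fourier f (x / (2 * Real.pi))‖
                    ≤ Ck * (2 * Real.pi) ^ k := h2
                  _ = (2 * Real.pi) ^ k * Ck := by ring
              have hSx : |S x| = |S x| / (x ^ k * Real.exp x) * (x ^ k * Real.exp x) :=
                (div_mul_cancel₀ _ (by positivity)).symm
              have hexp1 : Real.exp (-σ * x) * Real.exp x ≤ 1 := by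
                rw [← Real.exp_add, Real.exp_le_one_iff]
                nlinarith
              calc Real.exp (-σ * x) * |S x| * ‖FourierTransform.fourier f (x / (2 * Real.pi))‖
                  = (|S x| / (x ^ k * Real.exp x)) * (Real.exp (-σ * x) * Real.exp x)
                      * (x ^ k * ‖FourierTransform.fourier f (x / (2 * Real.pi))‖) := by
                    field_simp
                _ ≤ (|S x| / (x ^ k * Real.exp x)) * 1 * Ck' := by
                    apply mul_le_mul
                    · exact mul_le_mul_of_nonneg_left hexp1 (by positivity)
                    · exact hFb
                    · positivity
                    · positivity
                _ = Ck' * (|S x| / (x ^ k * Real.exp x)) := by ring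
  -- support of φ inside J
  have hφJ : ∀ t : ℝ, t ∉ J → φ t * U (σ + t * Complex.I) = 0 := by
    intro t ht
    have : φ t = 0 := by
      have hsupp := φ.support_eq
      by_contra h
      have : t ∈ Function.support (φ : ℝ → ℝ) := h
      rw [hsupp] at this
      simp only [Metric.mem_ball, Real.dist_eq, sub_zero] at this
      apply ht
      rw [hJdef]
      simp only [mem_Ioo]
      constructor <;> [nlinarith [abs_lt.mp this, show φ.rOut = 3*lam/4 from by rw [hφdef]]; nlinarith [abs_lt.mp this, show φ.rOut = 3*lam/4 from by rw [hφdef]]]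
    rw [this, zero_mul]
  have hintJ : (∫ t in J, φ t * U (σ + t * Complex.I)) = ∫ t : ℝ, φ t * U (σ + t * Complex.I) :=
    setIntegral_eq_integral_of_forall_compl_eq_zero fun t ht => hφJ t ht
  -- φ = 1 on I
  have hφI : ∀ t ∈ I, φ t = 1 := by
    intro t ht
    apply φ.one_of_mem_closedBall
    simp only [Metric.mem_closedBall, Real.dist_eq, sub_zero]
    rw [hIdef, mem_Ioo] at ht
    rw [abs_le]; constructor <;> linarith [ht.1, ht.2, show φ.rIn = lam/2 from by rw [hφdef]]
  -- integrability of U on I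
  have hUI : IntegrableOn (fun t : ℝ => U (σ + t * Complex.I)) I := by
    apply IntegrableOn.congr_fun (hkey2.integrableOn (s := I)) _ measurableSet_Ioo
    intro t ht
    simp only [hφI t ht, one_mul]
  -- ∫_I U ≤ A + ∫_J |g|
  have hJg : IntegrableOn (fun t => |g t|) J := hg.abs
  have hIint : (∫ t in I, U (σ + t * Complex.I)) ≤ A + ∫ t in J, |g t| := by
    have heqI : (∫ t in I, U (σ + t * Complex.I)) = ∫ t in I, φ t * U (σ + t * Complex.I) := by
      apply setIntegral_congr_fun measurableSet_Ioo
      intro t ht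
      simp only [hφI t ht, one_mul]
    have hdiff : (∫ t in J \ I, φ t * U (σ + t * Complex.I))
        = (∫ t in J, φ t * U (σ + t * Complex.I)) - ∫ t in I, φ t * U (σ + t * Complex.I) :=
      integral_diff measurableSet_Ioo (hkey2.integrableOn) hIJ
    have hlower : -(∫ t in J, |g t|) ≤ ∫ t in J \ I, φ t * U (σ + t * Complex.I) := by
      have h1 : (∫ t in J \ I, -|g t|) ≤ ∫ t in J \ I, φ t * U (σ + t * Complex.I) := by
        apply integral_mono_ae ((hJg.mono_set diff_subset).neg) (hkey2.integrableOn)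
        have hae := ae_restrict_of_ae_restrict_of_subset (diff_subset : J \ I ⊆ J) (hlow σ hσ')
        filter_upwards [hae] with t ht
        have h0 := φ.nonneg (x := t)
        have h1 := φ.le_one (x := t)
        show -|g t| ≤ φ t * U (σ + t * Complex.I)
        have e1 : φ t * g t ≤ φ t * U (σ + t * Complex.I) := mul_le_mul_of_nonneg_left ht h0
        have e2 : φ t * -|g t| ≤ φ t * g t := mul_le_mul_of_nonneg_left (neg_abs_le _) h0
        have e3 : φ t * |g t| ≤ |g t| := mul_le_of_le_one_left (abs_nonneg _) h1
        have e4 : φ t * -|g t| = -(φ t * |g t|) := by ring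
        linarith [e1, e2, e3, e4]
      have h2 : -(∫ t in J, |g t|) ≤ ∫ t in J \ I, -|g t| := by
        rw [integral_neg, neg_le_neg_iff]
        apply setIntegral_mono_set hJg
        · filter_upwards with t; positivity
        · exact (diff_subset : J \ I ⊆ J).eventuallyLE
      linarith
    have : (∫ t in I, φ t * U (σ + t * Complex.I))
        = (∫ t in J, φ t * U (σ + t * Complex.I)) - ∫ t in J \ I, φ t * U (σ + t * Complex.I) := by
      linarith [hdiff]
    rw [heqI, this, hintJ]
    have := abs_le.mp hAbound
    linarith [this.2, hlower]
  -- pointwise a.e. bound |U| ≤ U + 2|g| on I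
  have haeI : ∀ᵐ (t : ℝ) ∂(volume.restrict I), |U (σ + t * Complex.I)|
      ≤ U (σ + t * Complex.I) + 2 * |g t| := by
    have hae := ae_restrict_of_ae_restrict_of_subset hIJ (hlow σ hσ')
    filter_upwards [hae] with t ht
    rcases abs_cases (U (σ + t * Complex.I)) with ⟨h1, _⟩ | ⟨h1, _⟩ <;>
      [skip; skip] <;> nlinarith [neg_abs_le (g t), abs_nonneg (g t)]
  -- conclusion
  have hgI : IntegrableOn (fun t : ℝ => |g t|) I := hJg.mono_set hIJ
  have hsum : IntegrableOn (fun t : ℝ => U (σ + t * Complex.I) + 2 * |g t|) I :=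
    hUI.add (hgI.const_mul 2)
  calc (∫⁻ t in I, ENNReal.ofReal |U (σ + t * Complex.I)|)
      ≤ ∫⁻ t in I, ENNReal.ofReal (U (σ + t * Complex.I) + 2 * |g t|) := by
        apply lintegral_mono_ae
        filter_upwards [haeI] with t ht
        exact ENNReal.ofReal_le_ofReal ht
    _ = ENNReal.ofReal (∫ t in I, (U (σ + t * Complex.I) + 2 * |g t|)) := by
        rw [← ofReal_integral_eq_lintegral_ofReal hsum]
        filter_upwards [haeI] with t ht
        exact le_trans (abs_nonneg _) ht
    _ ≤ ENNReal.ofReal M := by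
        apply ENNReal.ofReal_le_ofReal
        rw [integral_add hUI (hgI.const_mul 2), integral_const_mul]
        have h1 : (∫ t in I, |g t|) ≤ ∫ t in J, |g t| := by
          apply setIntegral_mono_set hJg
          · filter_upwards with t; positivity
          · exact hIJ.eventuallyLE
        rw [hMdef]
        linarith [hIint]
end

section
/- Let F(z) = Σ_{n=0}^∞ c_n z^n be analytic on the open unit disc with real coefficients c_n satisfying Σ_{n=1}^∞ |c_n|/n^k < ∞ for some k ∈ ℕ, and set U(z) = Re F(z). Suppose there exist θ₀ ∈ (0,π) and g ∈ L¹(−θ₀,θ₀) such that U(re^{iθ}) ≥ g(θ) for a.e. θ ∈ (−θ₀,θ₀) and all r ∈ [0,1). Then sup_{0<r<1} ∫_{−θ₀/2}^{θ₀/2} |U(re^{iθ})| dθ < ∞. -/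
open MeasureTheory Filter Set

section Aux

open Polynomial

lemma polyIteratedDeriv (p : Polynomial ℝ) (n : ℕ) :
    iteratedDeriv n (fun x => p.eval x) = fun x => (derivative^[n] p).eval x := by
  induction n with
  | zero => simp
  | succ n ih =>
      rw [iteratedDeriv_succ, ih, Function.iterate_succ_apply']
      funext x
      exact Polynomial.deriv _

lemma dvd_derivative_of_pow_dvd {a : ℝ} {m : ℕ} {q : Polynomial ℝ}
    (h : (X - C a) ^ (m + 1) ∣ q) : (X - C a) ^ m ∣ derivative q := by
  obtain ⟨s, rfl⟩ := h
  rw [derivative_mul, derivative_pow]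
  refine dvd_add (Dvd.dvd.mul_right ?_ _) (Dvd.dvd.mul_right ?_ _)
  · simp only [Nat.add_sub_cancel]
    exact Dvd.dvd.mul_right (dvd_mul_left _ _) _
  · exact pow_dvd_pow _ (Nat.le_succ m)

lemma pow_dvd_iterate_derivative {a : ℝ} {k : ℕ} {p : Polynomial ℝ}
    (h : (X - C a) ^ k ∣ p) (j : ℕ) (hj : j ≤ k) :
    (X - C a) ^ (k - j) ∣ derivative^[j] p := by
  induction j with
  | zero => simpa using h
  | succ j ih =>
      rw [Function.iterate_succ_apply']
      have h1 : (k - j) = (k - (j+1)) + 1 := by omega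
      have := ih (by omega)
      rw [h1] at this
      exact dvd_derivative_of_pow_dvd this

lemma eval_iterate_derivative_eq_zero {a : ℝ} {k : ℕ} {p : Polynomial ℝ}
    (h : (X - C a) ^ k ∣ p) (j : ℕ) (hj : j < k) :
    (derivative^[j] p).eval a = 0 := by
  obtain ⟨s, hs⟩ := pow_dvd_iterate_derivative h j (le_of_lt hj)
  rw [hs]
  have : k - j ≠ 0 := by omega
  simp [this]

open Polynomial intervalIntegral

lemma ibp_bound (θ₀ : ℝ) (hθ₀ : 0 < θ₀) (n : ℕ) (hn : 1 ≤ n) :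
    ∀ (m : ℕ) (p : Polynomial ℝ) (B : ℝ),
    (∀ j, j < m → (derivative^[j] p).eval θ₀ = 0 ∧ (derivative^[j] p).eval (-θ₀) = 0) →
    (∀ x ∈ Set.Icc (-θ₀) θ₀, |(derivative^[m] p).eval x| ≤ B) →
    ‖∫ θ in (-θ₀)..θ₀, ((p.eval θ : ℝ) : ℂ) * Complex.exp (n * θ * Complex.I)‖
      ≤ 2 * θ₀ * B / n ^ m := by
  intro m
  induction m with
  | zero =>
      intro p B _ hB
      have h := intervalIntegral.norm_integral_le_of_norm_le_const
        (a := -θ₀) (b := θ₀) (C := B)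
        (f := fun θ => ((p.eval θ : ℝ) : ℂ) * Complex.exp (n * θ * Complex.I)) ?_
      · calc ‖∫ θ in (-θ₀)..θ₀, ((p.eval θ : ℝ) : ℂ) * Complex.exp (n * θ * Complex.I)‖
            ≤ B * |θ₀ - -θ₀| := h
          _ = 2 * θ₀ * B / (n : ℝ) ^ 0 := by
              rw [abs_of_nonneg (by linarith)]; ring
      · intro x hx
        have hx' : x ∈ Set.Icc (-θ₀) θ₀ := by
          have := Set.uIoc_subset_uIcc hx
          rwa [Set.uIcc_of_le (by linarith)] at this
        have he : ‖Complex.exp ((n : ℂ) * x * Complex.I)‖ = 1 := by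
          have : ((n : ℂ) * x * Complex.I) = ((n * x : ℝ) : ℂ) * Complex.I := by push_cast; ring
          rw [this]
          exact Complex.norm_exp_ofReal_mul_I _
        rw [norm_mul, he, mul_one, Complex.norm_real, Real.norm_eq_abs]
        simpa using hB x hx'
  | succ m ih =>
      intro p B hvan hB
      have hn0 : ((n : ℂ) * Complex.I) ≠ 0 := by
        simp only [ne_eq, mul_eq_zero, Complex.I_ne_zero, or_false, Nat.cast_eq_zero]
        omega
      set E : ℝ → ℂ := fun θ => Complex.exp ((n : ℂ) * θ * Complex.I) with hE
      have hEderiv : ∀ θ : ℝ, HasDerivAt (fun t : ℝ => E t * ((n : ℂ) * Complex.I)⁻¹) (E θ) θ := by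
        intro θ
        have h1 : HasDerivAt (fun t : ℝ => (n : ℂ) * t * Complex.I) ((n : ℂ) * Complex.I) θ := by
          have := (Complex.ofRealCLM.hasDerivAt (x := θ)).const_mul ((n : ℂ))
          have h2 := this.mul_const Complex.I
          simpa using h2
        have := (h1.cexp).mul_const ((n : ℂ) * Complex.I)⁻¹
        rw [mul_assoc, mul_inv_cancel₀ hn0, mul_one] at this
        exact this
      have hpderiv : ∀ θ : ℝ, HasDerivAt (fun t : ℝ => ((p.eval t : ℝ) : ℂ)) (((p.derivative.eval θ : ℝ) : ℂ)) θ := by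
        intro θ
        exact (p.hasDerivAt θ).ofReal_comp
      have hcont1 : Continuous fun θ : ℝ => ((p.derivative.eval θ : ℝ) : ℂ) :=
        Complex.continuous_ofReal.comp p.derivative.continuous
      have hcontE : Continuous E :=
        Complex.continuous_exp.comp
          (((continuous_const.mul Complex.continuous_ofReal).mul continuous_const))
      have hibp := intervalIntegral.integral_mul_deriv_eq_deriv_mul
        (a := -θ₀) (b := θ₀)
        (u := fun t => ((p.eval t : ℝ) : ℂ)) (u' := fun t => ((p.derivative.eval t : ℝ) : ℂ))
        (v := fun t => E t * ((n : ℂ) * Complex.I)⁻¹) (v' := E)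
        (fun x _ => hpderiv x) (fun x _ => hEderiv x)
        (hcont1.intervalIntegrable _ _) (hcontE.intervalIntegrable _ _)
      have hv0 : ((p.eval θ₀ : ℝ) : ℂ) = 0 := by
        have := (hvan 0 (Nat.succ_pos m)).1; simp at this; exact_mod_cast congrArg Complex.ofReal this
      have hv1 : ((p.eval (-θ₀) : ℝ) : ℂ) = 0 := by
        have := (hvan 0 (Nat.succ_pos m)).2; simp at this; exact_mod_cast congrArg Complex.ofReal this
      simp only [hv0, hv1, zero_mul, sub_zero, zero_sub] at hibp
      have hsplit : (∫ θ in (-θ₀)..θ₀, ((p.derivative.eval θ : ℝ) : ℂ) * (E θ * ((n : ℂ) * Complex.I)⁻¹))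
          = (∫ θ in (-θ₀)..θ₀, ((p.derivative.eval θ : ℝ) : ℂ) * E θ) * ((n : ℂ) * Complex.I)⁻¹ := by
        rw [← intervalIntegral.integral_mul_const]
        congr 1; funext θ; ring
      have key : ‖∫ θ in (-θ₀)..θ₀, ((p.derivative.eval θ : ℝ) : ℂ) * E θ‖ ≤ 2 * θ₀ * B / n ^ m := by
        apply ih p.derivative B
        · intro j hj
          have := hvan (j + 1) (by omega)
          rwa [Function.iterate_succ_apply] at this
        · intro x hx
          have := hB x hx
          rwa [Function.iterate_succ_apply] at this
      calc ‖∫ θ in (-θ₀)..θ₀, ((p.eval θ : ℝ) : ℂ) * E θ‖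
          = ‖(∫ θ in (-θ₀)..θ₀, ((p.derivative.eval θ : ℝ) : ℂ) * E θ) * ((n : ℂ) * Complex.I)⁻¹‖ := by
            rw [hibp, hsplit, norm_neg]
        _ = ‖∫ θ in (-θ₀)..θ₀, ((p.derivative.eval θ : ℝ) : ℂ) * E θ‖ / n := by
            rw [norm_mul, norm_inv, norm_mul, Complex.norm_I, mul_one, Complex.norm_natCast,
              div_eq_mul_inv]
        _ ≤ (2 * θ₀ * B / n ^ m) / n := by
            have hnp : (0:ℝ) < n := by exact_mod_cast Nat.lt_of_lt_of_le Nat.zero_lt_one hn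
            gcongr
        _ = 2 * θ₀ * B / n ^ (m + 1) := by
            rw [div_div, pow_succ]


lemma contIntOnIoo {f : ℝ → ℝ} (hf : Continuous f) (a b : ℝ) :
    MeasureTheory.IntegrableOn f (Set.Ioo a b) :=
  (hf.integrableOn_Icc).mono_set Set.Ioo_subset_Icc_self

end Aux

set_option maxHeartbeats 3000000 in
theorem koga_aux (c : ℕ → ℝ) (F : ℂ → ℂ)
    (hF : ∀ z : ℂ, ‖z‖ < 1 → HasSum (fun n : ℕ => (c n : ℂ) * z ^ n) (F z))
    (k : ℕ) (hck : Summable (fun n : ℕ => |c n| / (n : ℝ) ^ k))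
    (U : ℂ → ℝ) (hU : ∀ z : ℂ, U z = (F z).re)
    (θ₀ : ℝ) (hθ₀ : θ₀ ∈ Ioo 0 Real.pi)
    (g : ℝ → ℝ) (hg : IntegrableOn g (Ioo (-θ₀) θ₀))
    (hlow : ∀ r ∈ Ico (0 : ℝ) 1, ∀ᵐ θ ∂(volume.restrict (Ioo (-θ₀) θ₀)),
      g θ ≤ U (r * Complex.exp (θ * Complex.I))) :
    ∃ M : ℝ, ∀ r ∈ Ioo (0 : ℝ) 1,
      (∫⁻ θ in Ioo (-(θ₀ / 2)) (θ₀ / 2),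
          ENNReal.ofReal |U (r * Complex.exp (θ * Complex.I))|)
        ≤ ENNReal.ofReal M := by
  classical
  obtain ⟨hθ₀pos, hθ₀pi⟩ := hθ₀
  -- the bump polynomial
  set q : Polynomial ℝ := (Polynomial.C θ₀ - Polynomial.X) * (Polynomial.C θ₀ + Polynomial.X)
    with hqdef
  set p : Polynomial ℝ := q ^ k with hpdef
  have hpeval : ∀ x : ℝ, p.eval x = (θ₀ ^ 2 - x ^ 2) ^ k := by
    intro x
    simp only [hpdef, hqdef, Polynomial.eval_pow, Polynomial.eval_mul, Polynomial.eval_sub,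
      Polynomial.eval_add, Polynomial.eval_C, Polynomial.eval_X]
    ring_nf
  have hdvd1 : (Polynomial.X - Polynomial.C θ₀) ^ k ∣ p := by
    refine pow_dvd_pow_of_dvd ⟨-(Polynomial.C θ₀ + Polynomial.X), by ring⟩ k
  have hdvd2 : (Polynomial.X - Polynomial.C (-θ₀)) ^ k ∣ p := by
    refine pow_dvd_pow_of_dvd ⟨Polynomial.C θ₀ - Polynomial.X, by simp only [map_neg]; ring⟩ k
  -- bound on the k-th derivative of p
  obtain ⟨B₀, hB₀⟩ : ∃ B₀ : ℝ, ∀ x ∈ Icc (-θ₀) θ₀,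
      |(Polynomial.derivative^[k] p).eval x| ≤ B₀ := by
    obtain ⟨B₀, hB₀⟩ := (isCompact_Icc (a := -θ₀) (b := θ₀)).exists_bound_of_continuousOn
      ((Polynomial.derivative^[k] p).continuous.continuousOn)
    exact ⟨B₀, fun x hx => by simpa using hB₀ x hx⟩
  set B : ℝ := max B₀ 0 with hBdef
  have hBnonneg : 0 ≤ B := le_max_right _ _
  have hB : ∀ x ∈ Icc (-θ₀) θ₀, |(Polynomial.derivative^[k] p).eval x| ≤ B :=
    fun x hx => (hB₀ x hx).trans (le_max_left _ _)
  -- the Fourier coefficient bound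
  have hfour : ∀ n : ℕ, 1 ≤ n →
      |∫ θ in (-θ₀)..θ₀, p.eval θ * Real.cos (n * θ)| ≤ 2 * θ₀ * B / (n : ℝ) ^ k := by
    intro n hn
    have hvan : ∀ j, j < k → (Polynomial.derivative^[j] p).eval θ₀ = 0 ∧
        (Polynomial.derivative^[j] p).eval (-θ₀) = 0 := by
      intro j hj
      exact ⟨eval_iterate_derivative_eq_zero hdvd1 j hj,
        eval_iterate_derivative_eq_zero hdvd2 j hj⟩
    have hC := ibp_bound θ₀ hθ₀pos n hn k p B hvan hB
    have hcont : Continuous fun θ : ℝ => ((p.eval θ : ℝ) : ℂ) * Complex.exp (n * θ * Complex.I) :=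
      (Complex.continuous_ofReal.comp p.continuous).mul
        (Complex.continuous_exp.comp
          ((continuous_const.mul Complex.continuous_ofReal).mul continuous_const))
    have hre : (∫ θ in (-θ₀)..θ₀, p.eval θ * Real.cos (n * θ))
        = Complex.reCLM (∫ θ in (-θ₀)..θ₀,
            ((p.eval θ : ℝ) : ℂ) * Complex.exp (n * θ * Complex.I)) := by
      rw [← ContinuousLinearMap.intervalIntegral_comp_comm _ (hcont.intervalIntegrable _ _)]
      apply intervalIntegral.integral_congr
      intro θ _
      have harg : ((n : ℂ) * θ * Complex.I) = ((n * θ : ℝ) : ℂ) * Complex.I := by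
        push_cast; ring
      simp only [Complex.reCLM_apply, harg, Complex.re_ofReal_mul,
        Complex.exp_ofReal_mul_I_re]
    rw [hre]
    calc |Complex.reCLM (∫ θ in (-θ₀)..θ₀,
            ((p.eval θ : ℝ) : ℂ) * Complex.exp (n * θ * Complex.I))|
        ≤ ‖∫ θ in (-θ₀)..θ₀, ((p.eval θ : ℝ) : ℂ) * Complex.exp (n * θ * Complex.I)‖ :=
          Complex.abs_re_le_norm _
      _ ≤ 2 * θ₀ * B / (n : ℝ) ^ k := hC
  -- coefficient bounds
  set T : ℝ := ∑' n : ℕ, |c n| / (n : ℝ) ^ k with hTdef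
  have hTnonneg : 0 ≤ T := tsum_nonneg fun n => div_nonneg (abs_nonneg _) (by positivity)
  have hcoef : ∀ n : ℕ, 1 ≤ n → |c n| ≤ T * (n : ℝ) ^ k := by
    intro n hn
    have hnk : (0 : ℝ) < (n : ℝ) ^ k := by positivity
    have := Summable.le_tsum hck n (fun j _ => div_nonneg (abs_nonneg _) (by positivity))
    rw [div_le_iff₀ hnk] at this
    exact this

  -- summability of |c n| * r^n
  have hsummable : ∀ r : ℝ, 0 ≤ r → r < 1 → Summable (fun n : ℕ => |c n| * r ^ n) := by
    intro r hr0 hr1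
    have hrn : ‖r‖ < 1 := by rwa [Real.norm_eq_abs, abs_of_nonneg hr0]
    have h1 : Summable (fun n : ℕ => T * ((n : ℝ) ^ k * r ^ n)) :=
      (summable_pow_mul_geometric_of_norm_lt_one k hrn).mul_left T
    have h2 : Summable (fun n : ℕ => |c 0| * r ^ n) :=
      (summable_geometric_of_lt_one hr0 hr1).mul_left _
    apply Summable.of_nonneg_of_le (fun n => by positivity) (fun n => ?_) (h1.add h2)
    rcases Nat.eq_zero_or_pos n with h | h
    · subst h
      have h3 : (0:ℝ) ≤ T * ((0:ℕ) ^ k * r ^ 0) := by positivity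
      simp only [pow_zero, mul_one] at h3 ⊢
      push_cast at h3 ⊢
      nlinarith [abs_nonneg (c 0)]
    · have h4 : |c n| * r ^ n ≤ T * (n : ℝ) ^ k * r ^ n :=
        mul_le_mul_of_nonneg_right (hcoef n h) (by positivity)
      have h5 : (0:ℝ) ≤ |c 0| * r ^ n := by positivity
      nlinarith
  -- the real Fourier expansion of U on circles
  have hhs : ∀ r : ℝ, 0 ≤ r → r < 1 → ∀ θ : ℝ,
      HasSum (fun n : ℕ => c n * r ^ n * Real.cos (n * θ))
        (U ((r : ℂ) * Complex.exp ((θ : ℂ) * Complex.I))) := by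
    intro r hr0 hr1 θ
    set z : ℂ := (r : ℂ) * Complex.exp ((θ : ℂ) * Complex.I) with hz
    have hθI : ((θ : ℂ) * Complex.I) = ((θ : ℝ) : ℂ) * Complex.I := by norm_cast
    have hznorm : ‖z‖ < 1 := by
      rw [hz, norm_mul, Complex.norm_real, Real.norm_eq_abs, abs_of_nonneg hr0,
        hθI, Complex.norm_exp_ofReal_mul_I, mul_one]
      exact hr1
    have h := (hF z hznorm).mapL Complex.reCLM
    have hfe : (fun n : ℕ => Complex.reCLM ((c n : ℂ) * z ^ n))
        = fun n : ℕ => c n * r ^ n * Real.cos (n * θ) := by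
      funext n
      have hzn : z ^ n = ((r ^ n : ℝ) : ℂ) * Complex.exp (((n * θ : ℝ) : ℂ) * Complex.I) := by
        rw [hz, mul_pow, ← Complex.exp_nat_mul, Complex.ofReal_pow]
        congr 2
        push_cast
        ring
      rw [hzn]
      simp only [Complex.reCLM_apply, Complex.re_ofReal_mul, Complex.exp_ofReal_mul_I_re]
      push_cast
      ring
    rw [hfe] at h
    rw [hU]
    exact h
  -- constants
  set Psup : ℝ := (θ₀ ^ 2) ^ k with hPsupdef
  set p₀ : ℝ := (3 / 4 * θ₀ ^ 2) ^ k with hp₀def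
  have hp₀pos : 0 < p₀ := by positivity
  have hPsupnn : 0 ≤ Psup := by positivity
  have hpnn : ∀ x ∈ Icc (-θ₀) θ₀, 0 ≤ p.eval x := by
    intro x hx
    rw [hpeval]
    apply pow_nonneg
    nlinarith [hx.1, hx.2]
  have hpub : ∀ x ∈ Icc (-θ₀) θ₀, p.eval x ≤ Psup := by
    intro x hx
    rw [hpeval, hPsupdef]
    apply pow_le_pow_left₀ (by nlinarith [hx.1, hx.2])
    nlinarith [sq_nonneg x]
  have hplow : ∀ x ∈ Icc (-(θ₀/2)) (θ₀/2), p₀ ≤ p.eval x := by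
    intro x hx
    rw [hpeval, hp₀def]
    apply pow_le_pow_left₀ (by positivity)
    nlinarith [hx.1, hx.2]
  set Gint : ℝ := ∫ θ in Ioo (-θ₀) θ₀, |g θ| with hGdef
  have hGnn : 0 ≤ Gint := integral_nonneg fun θ => abs_nonneg _
  set a : ℕ → ℝ := fun n => 2 * θ₀ * B * (|c n| / (n : ℝ) ^ k)
      + (if n = 0 then |c 0| * (Psup * (2 * θ₀)) else 0) with hadef
  have hasummable : Summable a := by
    apply Summable.add
    · exact hck.mul_left _
    · apply summable_of_ne_finset_zero (s := {0})
      intro n hn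
      simp only [Finset.mem_singleton] at hn
      simp [hn]
  set Bsum : ℝ := ∑' n, a n with hBsumdef
  refine ⟨(Bsum + 2 * (Psup * Gint)) / p₀, ?_⟩
  rintro r ⟨hr0, hr1⟩
  set v : ℝ → ℝ := fun θ => U ((r : ℂ) * Complex.exp ((θ : ℂ) * Complex.I)) with hvdef
  have hhsr := hhs r hr0.le hr1
  have hvtsum : v = fun θ => ∑' n, c n * r ^ n * Real.cos (n * θ) :=
    funext fun θ => ((hhsr θ).tsum_eq).symm
  have hsum' := hsummable r hr0.le hr1
  have hvcont : Continuous v := by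
    rw [hvtsum]
    apply continuous_tsum (u := fun n => |c n| * r ^ n)
    · intro n
      exact (continuous_const.mul
        (Real.continuous_cos.comp (continuous_const.mul continuous_id)))
    · exact hsum'
    · intro n θ
      rw [Real.norm_eq_abs, abs_mul, abs_mul, abs_pow, abs_of_nonneg hr0.le]
      have h1 : |Real.cos (n * θ)| ≤ 1 := Real.abs_cos_le_one _
      have h2 : (0:ℝ) ≤ |c n| * r ^ n := by positivity
      nlinarith [abs_nonneg (c n), pow_nonneg hr0.le n]

  -- the integral swap
  have hμuniv : ((volume.restrict (Ioo (-θ₀) θ₀)) univ).toReal = 2 * θ₀ := by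
    rw [Measure.restrict_apply_univ, Real.volume_Ioo, ENNReal.toReal_ofReal (by linarith)]
    ring
  set f : ℕ → ℝ → ℝ := fun n θ => c n * r ^ n * Real.cos (n * θ) * p.eval θ with hfdef
  have hfcont : ∀ n, Continuous (f n) :=
    fun n => (continuous_const.mul
      (Real.continuous_cos.comp (continuous_const.mul continuous_id))).mul p.continuous
  have hfint : ∀ n, Integrable (f n) (volume.restrict (Ioo (-θ₀) θ₀)) := fun n => contIntOnIoo (hfcont n) _ _
  have hnormbound : ∀ n, (∫ θ, ‖f n θ‖ ∂(volume.restrict (Ioo (-θ₀) θ₀))) ≤ |c n| * r ^ n * Psup * (2 * θ₀) := by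
    intro n
    have hptwise : ∀ θ ∈ Ioo (-θ₀) θ₀, ‖f n θ‖ ≤ |c n| * r ^ n * Psup := by
      intro θ hθ
      have hθ' : θ ∈ Icc (-θ₀) θ₀ := Ioo_subset_Icc_self hθ
      rw [hfdef]
      simp only [Real.norm_eq_abs, abs_mul, abs_pow, abs_of_nonneg hr0.le]
      have h1 : |Real.cos (n * θ)| ≤ 1 := Real.abs_cos_le_one _
      have h2 : |p.eval θ| ≤ Psup := by
        rw [abs_of_nonneg (hpnn θ hθ')]
        exact hpub θ hθ'
      have h3 : (0:ℝ) ≤ |c n| * r ^ n := by positivity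
      calc |c n| * r ^ n * |Real.cos (n * θ)| * |p.eval θ|
          ≤ |c n| * r ^ n * 1 * Psup := by
            apply mul_le_mul (mul_le_mul_of_nonneg_left h1 h3) h2 (abs_nonneg _) (by positivity)
        _ = |c n| * r ^ n * Psup := by ring
    calc (∫ θ, ‖f n θ‖ ∂(volume.restrict (Ioo (-θ₀) θ₀))) ≤ ∫ _, (|c n| * r ^ n * Psup) ∂(volume.restrict (Ioo (-θ₀) θ₀)) := by
          apply setIntegral_mono_on (hfint n).norm (integrable_const _) measurableSet_Ioo hptwise
      _ = |c n| * r ^ n * Psup * (2 * θ₀) := by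
          rw [integral_const, measureReal_def, hμuniv, smul_eq_mul]; ring
  have hsumnorm : Summable fun n => ∫ θ, ‖f n θ‖ ∂(volume.restrict (Ioo (-θ₀) θ₀)) := by
    apply Summable.of_nonneg_of_le (fun n => integral_nonneg fun θ => norm_nonneg _) hnormbound
    exact (hsum'.mul_right Psup).mul_right (2 * θ₀)
  have hswap := MeasureTheory.integral_tsum_of_summable_integral_norm hfint hsumnorm
  have htsumpt : ∀ θ, (∑' n, f n θ) = v θ * p.eval θ :=
    fun θ => ((hhsr θ).mul_right _).tsum_eq
  have hIvp : (∫ θ, v θ * p.eval θ ∂(volume.restrict (Ioo (-θ₀) θ₀))) = ∑' n, ∫ θ, f n θ ∂(volume.restrict (Ioo (-θ₀) θ₀)) := by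
    rw [hswap]
    exact integral_congr_ae (ae_of_all _ fun θ => (htsumpt θ).symm)
  -- bound on individual coefficients of the swap
  have hIn : ∀ n, |∫ θ, f n θ ∂(volume.restrict (Ioo (-θ₀) θ₀))| ≤ a n := by
    intro n
    rcases Nat.eq_zero_or_pos n with h0 | h1
    · subst h0
      have habs : |∫ θ, f 0 θ ∂(volume.restrict (Ioo (-θ₀) θ₀))| ≤ ∫ θ, ‖f 0 θ‖ ∂(volume.restrict (Ioo (-θ₀) θ₀)) := by
        rw [← Real.norm_eq_abs]
        exact norm_integral_le_integral_norm _
      have h2 := (habs.trans (hnormbound 0))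
      simp only [pow_zero, mul_one] at h2
      have h3 : (0:ℝ) ≤ 2 * θ₀ * B * (|c 0| / ((0:ℕ):ℝ) ^ k) := by positivity
      have hgoal : a 0 = 2 * θ₀ * B * (|c 0| / ((0:ℕ):ℝ) ^ k) + |c 0| * (Psup * (2 * θ₀)) := by
        simp [hadef]
      rw [hgoal]
      nlinarith [h2, h3]
    · have hpull : (∫ θ, f n θ ∂(volume.restrict (Ioo (-θ₀) θ₀)))
          = (c n * r ^ n) * ∫ θ, p.eval θ * Real.cos (n * θ) ∂(volume.restrict (Ioo (-θ₀) θ₀)) := by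
        rw [← integral_const_mul]
        apply integral_congr_ae (ae_of_all _ fun θ => ?_)
        rw [hfdef]; ring
      have hIooIoc : (∫ θ, p.eval θ * Real.cos (n * θ) ∂(volume.restrict (Ioo (-θ₀) θ₀)))
          = ∫ θ in (-θ₀)..θ₀, p.eval θ * Real.cos (n * θ) := by
        rw [intervalIntegral.integral_of_le (by linarith), integral_Ioc_eq_integral_Ioo]
      have hfourn := hfour n h1
      have hrn1 : r ^ n ≤ 1 := pow_le_one₀ hr0.le hr1.le
      have hnk : (0:ℝ) < (n:ℝ) ^ k := by
        have : (0:ℝ) < (n:ℝ) := by exact_mod_cast h1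
        positivity
      rw [hpull, abs_mul, hIooIoc]
      have h4 : |c n * r ^ n| ≤ |c n| := by
        rw [abs_mul, abs_pow, abs_of_nonneg hr0.le]
        calc |c n| * r ^ n ≤ |c n| * 1 := mul_le_mul_of_nonneg_left hrn1 (abs_nonneg _)
          _ = |c n| := mul_one _
      have h5 : |c n * r ^ n| * |∫ θ in (-θ₀)..θ₀, p.eval θ * Real.cos (n * θ)|
          ≤ |c n| * (2 * θ₀ * B / (n:ℝ) ^ k) :=
        mul_le_mul h4 hfourn (abs_nonneg _) (abs_nonneg _)
      have hne : n ≠ 0 := Nat.pos_iff_ne_zero.mp h1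
      have hga : a n = 2 * θ₀ * B * (|c n| / (n:ℝ) ^ k) := by simp [hadef, hne]
      rw [hga]
      calc |c n * r ^ n| * |∫ θ in (-θ₀)..θ₀, p.eval θ * Real.cos (n * θ)|
          ≤ |c n| * (2 * θ₀ * B / (n:ℝ) ^ k) := h5
        _ = 2 * θ₀ * B * (|c n| / (n:ℝ) ^ k) := by ring
  have hIabs_summable : Summable fun n => |∫ θ, f n θ ∂(volume.restrict (Ioo (-θ₀) θ₀))| :=
    Summable.of_nonneg_of_le (fun n => abs_nonneg _) hIn hasummable
  have hIbound : |∫ θ, v θ * p.eval θ ∂(volume.restrict (Ioo (-θ₀) θ₀))| ≤ Bsum := by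
    rw [hIvp]
    calc |∑' n, ∫ θ, f n θ ∂(volume.restrict (Ioo (-θ₀) θ₀))| ≤ ∑' n, |∫ θ, f n θ ∂(volume.restrict (Ioo (-θ₀) θ₀))| := by
          have := norm_tsum_le_tsum_norm (f := fun n => ∫ θ, f n θ ∂(volume.restrict (Ioo (-θ₀) θ₀)))
            (by simpa [Real.norm_eq_abs] using hIabs_summable)
          simpa [Real.norm_eq_abs] using this
      _ ≤ ∑' n, a n := hIabs_summable.tsum_le_tsum hIn hasummable
      _ = Bsum := rfl

  -- final chain
  have hSsub : Ioo (-(θ₀/2)) (θ₀/2) ⊆ Ioo (-θ₀) θ₀ := by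
    apply Ioo_subset_Ioo <;> linarith
  have hvp_int_full : Integrable (fun θ => |v θ| * p.eval θ) (volume.restrict (Ioo (-θ₀) θ₀)) :=
    contIntOnIoo (hvcont.abs.mul p.continuous) _ _
  have hvp_int_S : IntegrableOn (fun θ => |v θ| * p.eval θ) (Ioo (-(θ₀/2)) (θ₀/2)) :=
    contIntOnIoo (hvcont.abs.mul p.continuous) _ _
  have hv_int_S : IntegrableOn (fun θ => |v θ|) (Ioo (-(θ₀/2)) (θ₀/2)) :=
    contIntOnIoo hvcont.abs _ _
  have hstep1 : p₀ * ∫ θ in Ioo (-(θ₀/2)) (θ₀/2), |v θ|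
      ≤ ∫ θ in Ioo (-(θ₀/2)) (θ₀/2), |v θ| * p.eval θ := by
    rw [← integral_const_mul]
    apply setIntegral_mono_on (hv_int_S.const_mul p₀) hvp_int_S measurableSet_Ioo
    intro x hx
    have hx' : x ∈ Icc (-(θ₀/2)) (θ₀/2) := Ioo_subset_Icc_self hx
    calc p₀ * |v x| = |v x| * p₀ := mul_comm _ _
      _ ≤ |v x| * p.eval x := mul_le_mul_of_nonneg_left (hplow x hx') (abs_nonneg _)
  have hstep2 : (∫ θ in Ioo (-(θ₀/2)) (θ₀/2), |v θ| * p.eval θ)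
      ≤ ∫ θ, |v θ| * p.eval θ ∂(volume.restrict (Ioo (-θ₀) θ₀)) := by
    apply setIntegral_mono_set hvp_int_full ?_ (HasSubset.Subset.eventuallyLE hSsub)
    rw [EventuallyLE, ae_restrict_iff' measurableSet_Ioo]
    exact ae_of_all _ fun x hx =>
      mul_nonneg (abs_nonneg _) (hpnn x (Ioo_subset_Icc_self hx))
  have hid : ∀ x : ℝ, |v x| * p.eval x = v x * p.eval x + 2 * (max (-(v x)) 0 * p.eval x) := by
    intro x
    rcases le_total 0 (v x) with h | h
    · rw [abs_of_nonneg h, max_eq_right (by linarith)]; ring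
    · rw [abs_of_nonpos h, max_eq_left (by linarith)]; ring
  have hint1 : Integrable (fun θ => v θ * p.eval θ) (volume.restrict (Ioo (-θ₀) θ₀)) :=
    contIntOnIoo (hvcont.mul p.continuous) _ _
  have hmaxcont : Continuous fun θ => max (-(v θ)) 0 := hvcont.neg.max continuous_const
  have hint2 : Integrable (fun θ => max (-(v θ)) 0 * p.eval θ) (volume.restrict (Ioo (-θ₀) θ₀)) :=
    contIntOnIoo (hmaxcont.mul p.continuous) _ _
  have hstep3 : (∫ θ, |v θ| * p.eval θ ∂(volume.restrict (Ioo (-θ₀) θ₀)))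
      = (∫ θ, v θ * p.eval θ ∂(volume.restrict (Ioo (-θ₀) θ₀))) + 2 * ∫ θ, max (-(v θ)) 0 * p.eval θ ∂(volume.restrict (Ioo (-θ₀) θ₀)) := by
    rw [← integral_const_mul, ← integral_add hint1 ((hint2).const_mul 2)]
    exact integral_congr_ae (ae_of_all _ fun x => hid x)
  have hstep4 : (∫ θ, v θ * p.eval θ ∂(volume.restrict (Ioo (-θ₀) θ₀))) ≤ Bsum := le_trans (le_abs_self _) hIbound
  have hstep5 : (∫ θ, max (-(v θ)) 0 * p.eval θ ∂(volume.restrict (Ioo (-θ₀) θ₀))) ≤ Psup * Gint := by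
    have hlr := hlow r ⟨hr0.le, hr1⟩
    have hle : (fun θ => max (-(v θ)) 0 * p.eval θ) ≤ᵐ[volume.restrict (Ioo (-θ₀) θ₀)] fun θ => |g θ| * Psup := by
      filter_upwards [hlr, ae_restrict_mem measurableSet_Ioo] with θ h1 h2
      have h1' : g θ ≤ v θ := h1
      have hθ' : θ ∈ Icc (-θ₀) θ₀ := Ioo_subset_Icc_self h2
      have hmax : max (-(v θ)) 0 ≤ |g θ| := by
        rcases le_total (v θ) 0 with h | h
        · rw [max_eq_left (by linarith)]
          calc -(v θ) ≤ -(g θ) := by linarith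
            _ ≤ |g θ| := neg_le_abs _
        · rw [max_eq_right (by linarith)]
          exact abs_nonneg _
      exact mul_le_mul hmax (hpub θ hθ') (hpnn θ hθ') (abs_nonneg _)
    calc (∫ θ, max (-(v θ)) 0 * p.eval θ ∂(volume.restrict (Ioo (-θ₀) θ₀))) ≤ ∫ θ, |g θ| * Psup ∂(volume.restrict (Ioo (-θ₀) θ₀)) :=
        integral_mono_ae hint2 (hg.abs.mul_const Psup) hle
      _ = Psup * Gint := by
        rw [integral_mul_const]
        exact mul_comm _ _
  have hfin : (∫ θ in Ioo (-(θ₀/2)) (θ₀/2), |v θ|) ≤ (Bsum + 2 * (Psup * Gint)) / p₀ := by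
    rw [le_div_iff₀ hp₀pos]
    have := hstep1.trans (hstep2.trans (le_of_eq hstep3))
    linarith [hstep4, hstep5]
  have hpoint : ∀ θ : ℝ, ENNReal.ofReal |U ((r:ℂ) * Complex.exp ((θ:ℂ) * Complex.I))|
      = ENNReal.ofReal |v θ| := fun θ => by rw [hvdef]
  calc (∫⁻ θ in Ioo (-(θ₀ / 2)) (θ₀ / 2),
        ENNReal.ofReal |U ((r:ℂ) * Complex.exp ((θ:ℂ) * Complex.I))|)
      = ∫⁻ θ in Ioo (-(θ₀ / 2)) (θ₀ / 2), ENNReal.ofReal |v θ| :=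
        lintegral_congr fun θ => hpoint θ
    _ = ENNReal.ofReal (∫ θ in Ioo (-(θ₀ / 2)) (θ₀ / 2), |v θ|) :=
        (ofReal_integral_eq_lintegral_ofReal hv_int_S
          (ae_of_all _ fun θ => abs_nonneg _)).symm
    _ ≤ ENNReal.ofReal ((Bsum + 2 * (Psup * Gint)) / p₀) := ENNReal.ofReal_le_ofReal hfin





/-- Remark 6.1 (second part, power series analog): if the real coefficients of
`F(z) = Σ cₙ zⁿ` satisfy `Σ |cₙ|/n^k < ∞` and `U = Re F` admits an `L¹` lower
bound on a sector, then the `L¹` means of `U` over `(-θ₀/2, θ₀/2)` are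
uniformly bounded for `0 < r < 1`. -/
theorem remark_b2_covers_Koga_powerSeries (c : ℕ → ℝ) (F : ℂ → ℂ)
    (hF : ∀ z : ℂ, ‖z‖ < 1 → HasSum (fun n : ℕ => (c n : ℂ) * z ^ n) (F z))
    (k : ℕ) (hck : Summable (fun n : ℕ => |c n| / (n : ℝ) ^ k))
    (U : ℂ → ℝ) (hU : ∀ z : ℂ, U z = (F z).re)
    (θ₀ : ℝ) (hθ₀ : θ₀ ∈ Ioo 0 Real.pi)
    (g : ℝ → ℝ) (hg : IntegrableOn g (Ioo (-θ₀) θ₀))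
    (hlow : ∀ r ∈ Ico (0 : ℝ) 1, ∀ᵐ θ ∂(volume.restrict (Ioo (-θ₀) θ₀)),
      g θ ≤ U (r * Complex.exp (θ * Complex.I))) :
    ∃ M : ℝ, ∀ r ∈ Ioo (0 : ℝ) 1,
      (∫⁻ θ in Ioo (-(θ₀ / 2)) (θ₀ / 2),
          ENNReal.ofReal |U (r * Complex.exp (θ * Complex.I))|)
        ≤ ENNReal.ofReal M :=
  koga_aux c F hF k hck U hU θ₀ hθ₀ g hg hlow
end
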